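/- arXiv:1108.3736 — 5 statements merged into one kernel-verified Lean document; each statement's English description precedes it below -/
import Mathlib

section
/- Let (X,d) be a sequentially Yoneda-complete T1 bounded quasi-metric space, let K ∈ K_0(X), let x ∈ K, and let (F_n) be a standard representation of K. Then there exists a sequence ((x_n, r_n))_{n>0} with (x_n, r_n) ∈ F_n for every n and d*(x_n, x) → 0, where d*(a,b) = max{d(a,b), d(b,a)}. -/
open scoped NNReal

/-! Generic sequence notions for an arbitrary "distance" function `ρ`. -/

def IsCauchySeq {α : Type _} (ρ : α → α → ℝ) (u : ℕ → α) : Prop :=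
  ∀ ε : ℝ, 0 < ε → ∃ N, ∀ n m, N ≤ n → n ≤ m → ρ (u n) (u m) < ε

def IsBiCauchySeq {α : Type _} (ρ : α → α → ℝ) (u : ℕ → α) : Prop :=
  ∀ ε : ℝ, 0 < ε → ∃ N, ∀ n m, N ≤ n → N ≤ m → ρ (u n) (u m) < ε

/-- `sup_{m ≥ n} ρ (u m) y`. -/
noncomputable def supTail {α : Type _} (ρ : α → α → ℝ) (u : ℕ → α) (y : α) (n : ℕ) : ℝ :=
  sSup {t | ∃ m, n ≤ m ∧ t = ρ (u m) y}

/-- `x` is a Yoneda limit of `u`:  `ρ x y = inf_n sup_{m ≥ n} ρ (u m) y` for all `y`. -/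
def IsYonedaLim {α : Type _} (ρ : α → α → ℝ) (u : ℕ → α) (x : α) : Prop :=
  ∀ y, ρ x y = sInf (Set.range (supTail ρ u y))

def SeqYonedaCompleteD {α : Type _} (ρ : α → α → ℝ) : Prop :=
  ∀ u, IsCauchySeq ρ u → ∃ x, IsYonedaLim ρ u x

/-- Smyth completeness: every Cauchy sequence converges in the symmetrized metric. -/
def SmythCompleteD {α : Type _} (ρ : α → α → ℝ) : Prop :=
  ∀ u, IsCauchySeq ρ u → ∃ x, ∀ ε : ℝ, 0 < ε → ∃ N, ∀ n, N ≤ n →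
    max (ρ x (u n)) (ρ (u n) x) < ε

/-- `inf_{m ≥ n} ρ e (u m)`. -/
noncomputable def infTail {α : Type _} (ρ : α → α → ℝ) (u : ℕ → α) (e : α) (n : ℕ) : ℝ :=
  sInf {t | ∃ m, n ≤ m ∧ t = ρ e (u m)}

/-- `e` is a finite point: for every Cauchy sequence `u` with Yoneda limit `x`,
`ρ e x = sup_n inf_{m ≥ n} ρ e (u m)`. -/
def IsFinitePoint {α : Type _} (ρ : α → α → ℝ) (e : α) : Prop :=
  ∀ u x, IsCauchySeq ρ u → IsYonedaLim ρ u x →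
    ρ e x = sSup (Set.range (infTail ρ u e))

/-- ω-algebraic: a countable set of finite points such that every point is a Yoneda limit
of a Cauchy sequence of points from it. -/
def OmegaAlgebraicD {α : Type _} (ρ : α → α → ℝ) : Prop :=
  ∃ X0 : Set α, X0.Countable ∧ (∀ e ∈ X0, IsFinitePoint ρ e) ∧
    ∀ x, ∃ u : ℕ → α, (∀ n, u n ∈ X0) ∧ IsCauchySeq ρ u ∧ IsYonedaLim ρ u x

/-- A quasi-metric on `X`. -/
structure QuasiMetric (X : Type _) : Type _ where
  d : X → X → ℝ
  nonneg : ∀ x y, 0 ≤ d x y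
  triangle : ∀ x y z, d x z ≤ d x y + d y z
  eq_iff : ∀ x y, x = y ↔ d x y = 0 ∧ d y x = 0

/-- Formal balls over `X`. -/
abbrev FB (X : Type _) := X × ℝ≥0

/-- Nonempty finite subsets of the space of formal balls. -/
def PFin (X : Type _) : Type _ := {F : Set (FB X) // F.Finite ∧ F.Nonempty}

namespace QuasiMetric

variable {X : Type _} (Q : QuasiMetric X)

def IsT1 : Prop := ∀ x y, Q.d x y = 0 → x = y

def Bounded : Prop := ∃ C : ℝ, ∀ x y, Q.d x y ≤ C

def ball (x : X) (ε : ℝ) : Set X := {y | Q.d x y < ε}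

/-- The topology `τ_d` induced by the quasi-metric. -/
def tau : TopologicalSpace X :=
  TopologicalSpace.generateFrom {s | ∃ x ε, 0 < ε ∧ s = Q.ball x ε}

def dstar (x y : X) : ℝ := max (Q.d x y) (Q.d y x)

def SeqYonedaComplete : Prop := SeqYonedaCompleteD Q.d

def SmythComplete : Prop := SmythCompleteD Q.d

/-- `K` is `d⁻¹`-precompact. -/
def dInvPrecompact (K : Set X) : Prop :=
  ∀ ε : ℝ, 0 < ε → ∃ F : Set X, F.Finite ∧ F ⊆ K ∧ ∀ k ∈ K, ∃ x ∈ F, Q.d k x < ε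

/-- The nonempty compact subsets of `(X, τ_d)`. -/
def K0 : Set (Set X) := {K | K.Nonempty ∧ @IsCompact X Q.tau K}

noncomputable def dPtSet (x : X) (B : Set X) : ℝ := sInf {t | ∃ b ∈ B, t = Q.d x b}

noncomputable def dSetPt (A : Set X) (y : X) : ℝ := sInf {t | ∃ a ∈ A, t = Q.d a y}

/-- The Hausdorff quasi-metric. -/
noncomputable def Hd (A B : Set X) : ℝ :=
  max (sSup {t | ∃ b ∈ B, t = Q.dSetPt A b}) (sSup {t | ∃ a ∈ A, t = Q.dPtSet a B})

/-- Order on formal balls: `(x,r) ⊑ (y,s)  ↔  d x y ≤ r - s`. -/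
def ble (a b : FB X) : Prop := Q.d a.1 b.1 ≤ (a.2 : ℝ) - (b.2 : ℝ)

/-- Auxiliary relation: `(x,r) ≺ (y,s)  ↔  d x y < r - s`. -/
def blt (a b : FB X) : Prop := Q.d a.1 b.1 < (a.2 : ℝ) - (b.2 : ℝ)

def iota (x : X) : FB X := (x, 0)

/-- The quasi-metric `q` on formal balls. -/
noncomputable def q (a b : FB X) : ℝ :=
  max (Q.d a.1 b.1) |(a.2 : ℝ) - (b.2 : ℝ)| + ((b.2 : ℝ) - (a.2 : ℝ))

/-- The Egli–Milner relation `≺_EM` on nonempty finite sets of formal balls. -/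
def em (F G : PFin X) : Prop :=
  (∀ b ∈ G.1, ∃ a ∈ F.1, Q.blt a b) ∧ (∀ a ∈ F.1, ∃ b ∈ G.1, Q.blt a b)

/-- The non-strict Egli–Milner relation `⊑_EM`. -/
def emLE (F G : PFin X) : Prop :=
  (∀ a ∈ F.1, ∃ b ∈ G.1, Q.ble a b) ∧ (∀ b ∈ G.1, ∃ a ∈ F.1, Q.ble a b)

/-- `rF = max { r : (x,r) ∈ F }`. -/
noncomputable def rF (F : PFin X) : ℝ := sSup {t | ∃ p ∈ F.1, t = (p.2 : ℝ)}

/-- `δ(F,G) = min {(r-s) - d x y : (x,r) ∈ F, (y,s) ∈ G, (x,r) ≺ (y,s)}`. -/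
noncomputable def delta (F G : PFin X) : ℝ :=
  sInf {t | ∃ a ∈ F.1, ∃ b ∈ G.1, Q.blt a b ∧ t = ((a.2 : ℝ) - (b.2 : ℝ)) - Q.d a.1 b.1}

/-- The Hausdorff quasi-metric `H_q` on `P_fin(BX)` induced by `q`. -/
noncomputable def Hq (F G : PFin X) : ℝ :=
  max (sSup {t | ∃ a ∈ F.1, t = sInf {s | ∃ b ∈ G.1, s = Q.q a b}})
      (sSup {t | ∃ b ∈ G.1, t = sInf {s | ∃ a ∈ F.1, s = Q.q a b}})

/-- ω-chains in `(P_fin(BX), ≺_EM)`; `c n` plays the role of `F_{n+1}`. -/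
def Chain : Type _ := {c : ℕ → PFin X // ∀ n, Q.em (c n) (c (n + 1))}

def chainLE (c c' : Q.Chain) : Prop := ∀ n, ∃ m, Q.em (c.1 n) (c'.1 m)

def chainEquiv (c c' : Q.Chain) : Prop := Q.chainLE c c' ∧ Q.chainLE c' c

lemma blt_trans {a b c : FB X} (h1 : Q.blt a b) (h2 : Q.blt b c) : Q.blt a c := by
  have h3 := Q.triangle a.1 b.1 c.1
  unfold blt at h1 h2 ⊢
  linarith

lemma em_trans {F G H : PFin X} (h1 : Q.em F G) (h2 : Q.em G H) : Q.em F H := by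
  constructor
  · intro b hb
    obtain ⟨a, ha, hab⟩ := h2.1 b hb
    obtain ⟨a', ha', h'⟩ := h1.1 a ha
    exact ⟨a', ha', Q.blt_trans h' hab⟩
  · intro a ha
    obtain ⟨b, hb, hab⟩ := h1.2 a ha
    obtain ⟨c, hc, hbc⟩ := h2.2 b hb
    exact ⟨c, hc, Q.blt_trans hab hbc⟩

lemma chainLE_refl (c : Q.Chain) : Q.chainLE c c := fun n => ⟨n + 1, c.2 n⟩

lemma chainLE_trans {a b c : Q.Chain} (h1 : Q.chainLE a b) (h2 : Q.chainLE b c) :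
    Q.chainLE a c := by
  intro n
  obtain ⟨m, hm⟩ := h1 n
  obtain ⟨k, hk⟩ := h2 m
  exact ⟨k, Q.em_trans hm hk⟩

def chainSetoid : Setoid Q.Chain where
  r := Q.chainEquiv
  iseqv := ⟨fun c => ⟨Q.chainLE_refl c, Q.chainLE_refl c⟩,
    fun h => ⟨h.2, h.1⟩,
    fun h1 h2 => ⟨Q.chainLE_trans h1.1 h2.1, Q.chainLE_trans h2.2 h1.2⟩⟩

/-- The ω-Plotkin domain `CBX`: equivalence classes of ω-chains in `(P_fin(BX), ≺_EM)`. -/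
def CBX : Type _ := Quotient Q.chainSetoid

/-- The partial order of `CBX`. -/
def cbLE : Q.CBX → Q.CBX → Prop :=
  Quotient.lift₂ Q.chainLE (by
    intro a b a' b' ha hb
    have ha' : Q.chainEquiv a a' := ha
    have hb' : Q.chainEquiv b b' := hb
    exact propext ⟨fun h => Q.chainLE_trans (Q.chainLE_trans ha'.2 h) hb'.1,
      fun h => Q.chainLE_trans (Q.chainLE_trans ha'.1 h) hb'.2⟩)

def chainWB (c c' : Q.Chain) : Prop := ∃ m, ∀ n, Q.em (c.1 n) (c'.1 m)

/-- The way-below relation of `CBX`. -/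
def cbWB : Q.CBX → Q.CBX → Prop :=
  Quotient.lift₂ Q.chainWB (by
    intro a b a' b' ha hb
    have ha' : Q.chainEquiv a a' := ha
    have hb' : Q.chainEquiv b b' := hb
    apply propext
    constructor
    · rintro ⟨m, hm⟩
      obtain ⟨k, hk⟩ := hb'.1 m
      refine ⟨k, fun n => ?_⟩
      obtain ⟨p, hp⟩ := ha'.2 n
      exact Q.em_trans hp (Q.em_trans (hm p) hk)
    · rintro ⟨m, hm⟩
      obtain ⟨k, hk⟩ := hb'.2 m
      refine ⟨k, fun n => ?_⟩
      obtain ⟨p, hp⟩ := ha'.1 n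
      exact Q.em_trans hp (Q.em_trans (hm p) hk))

/-- The Scott topology of `CBX`, generated by the sets `↟I`. -/
def scottTop : TopologicalSpace Q.CBX :=
  TopologicalSpace.generateFrom {s | ∃ I : Q.CBX, s = {J | Q.cbWB I J}}

def upSet (F : PFin X) : Set (FB X) := {b | ∃ a ∈ F.1, Q.ble a b}

/-- `I⁺ = ⋂_n ↑F_n` for a representing chain. -/
def Iplus (c : Q.Chain) : Set (FB X) := ⋂ n, Q.upSet (c.1 n)

noncomputable def IplusQ (I : Q.CBX) : Set (FB X) := Q.Iplus (Quotient.out I)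

/-- `r̄ I = inf { rF : F occurs in some chain representing I }`. -/
noncomputable def rbar (I : Q.CBX) : ℝ :=
  sInf {t | ∃ c : Q.Chain, Quotient.mk Q.chainSetoid c = I ∧ ∃ n, t = rF (c.1 n)}

/-- `c` is a standard representation of `K`: `c n` (playing the role of `F_{n+1}`) is
`{(x_i^j, 1/(n+1)) : 1 ≤ j ≤ n+1, 1 ≤ i ≤ m_j}` where the `x_i^j ∈ K` satisfy
`∀ y ∈ K, ∃ i, d (x_i^j) y < 1/(2 j²)`. -/
def IsStdRep (K : Set X) (c : Q.Chain) : Prop :=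
  ∃ (m : ℕ → ℕ) (x : ℕ → ℕ → X),
    (∀ j i, 1 ≤ j → 1 ≤ i → i ≤ m j → x j i ∈ K) ∧
    (∀ j, 1 ≤ j → ∀ y ∈ K, ∃ i, 1 ≤ i ∧ i ≤ m j ∧ Q.d (x j i) y < 1 / (2 * (j : ℝ) ^ 2)) ∧
    (∀ n : ℕ, (c.1 n).1 =
      {p : FB X | ∃ j i, 1 ≤ j ∧ j ≤ n + 1 ∧ 1 ≤ i ∧ i ≤ m j ∧
        p = (x j i, ((n : ℝ≥0) + 1)⁻¹)})

/-- `D` on representing chains: `sup_n inf_m H_q(F_n, G_m)`. -/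
noncomputable def Dchain (c c' : Q.Chain) : ℝ :=
  sSup {t | ∃ n, t = sInf {s | ∃ m, s = Q.Hq (c.1 n) (c'.1 m)}}

/-- The quasi-metric `D` on `CBX`. -/
noncomputable def D (I J : Q.CBX) : ℝ := Q.Dchain (Quotient.out I) (Quotient.out J)

/-- The topology induced by `D` on `CBX`. -/
def DTop : TopologicalSpace Q.CBX :=
  TopologicalSpace.generateFrom
    {s | ∃ (I : Q.CBX) (ε : ℝ), 0 < ε ∧ s = {J | Q.D I J < ε}}

/-- The hyperspace `K_0(X)` as a type. -/
def K0T : Type _ := {K : Set X // K.Nonempty ∧ @IsCompact X Q.tau K}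

/-- The Vietoris topology on `K_0(X)`. -/
def vietoris : TopologicalSpace Q.K0T :=
  TopologicalSpace.generateFrom
    ({s | ∃ V : Set X, @IsOpen X Q.tau V ∧ s = {K : Q.K0T | (K.1 ∩ V).Nonempty}} ∪
     {s | ∃ V : Set X, @IsOpen X Q.tau V ∧ s = {K : Q.K0T | K.1 ⊆ V}})

/-- The topology of the Hausdorff quasi-metric on `K_0(X)`. -/
def hdTop : TopologicalSpace Q.K0T :=
  TopologicalSpace.generateFrom
    {s | ∃ (K : Q.K0T) (ε : ℝ), 0 < ε ∧ s = {L : Q.K0T | Q.Hd K.1 L.1 < ε}}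

/-- Round ideals of `(P_fin(BX), ≺_EM)`. -/
def IsRoundIdeal (I : Set (PFin X)) : Prop :=
  I.Nonempty ∧ (∀ F G : PFin X, Q.em F G → G ∈ I → F ∈ I) ∧
  (∀ F ∈ I, ∀ G ∈ I, ∃ H ∈ I, Q.em F H ∧ Q.em G H)

end QuasiMetric

/-- for `x ∈ K` and a standard representation `(F_n)` of `K`, there is a sequence
`(x_n, r_n) ∈ F_n` with `d*(x_n, x) → 0`. -/
theorem stmt1 {X : Type} (Q : QuasiMetric X) (hT1 : Q.IsT1) (hB : Q.Bounded)
    (hY : Q.SeqYonedaComplete) (K : Set X) (hK : K ∈ Q.K0) (x : X) (hx : x ∈ K)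
    (c : Q.Chain) (hc : Q.IsStdRep K c) :
    ∃ a : ℕ → FB X, (∀ n, a n ∈ (c.1 n).1) ∧
      Filter.Tendsto (fun n => Q.dstar (a n).1 x) Filter.atTop (nhds 0) := by
  classical
  letI : TopologicalSpace X := Q.tau
  obtain ⟨hKne, hKcomp⟩ := hK
  obtain ⟨m, xf, hmem, hcov, hset⟩ := hc
  have hchoice : ∀ n : ℕ, ∃ i, 1 ≤ i ∧ i ≤ m (n + 1) ∧
      Q.d (xf (n + 1) i) x < 1 / (2 * ((n : ℝ) + 1) ^ 2) := by
    intro n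
    have h := hcov (n + 1) (by omega) x hx
    obtain ⟨i, h1, h2, h3⟩ := h
    exact ⟨i, h1, h2, by push_cast at h3 ⊢; convert h3 using 3⟩
  choose idx h1 h2 h3 using hchoice
  set z : ℕ → X := fun n => xf (n + 1) (idx n) with hz
  have hzK : ∀ n, z n ∈ K := fun n => hmem _ _ (by omega) (h1 n) (h2 n)
  have hzx : ∀ n, Q.d (z n) x < 1 / ((n : ℝ) + 1) := by
    intro n
    refine (h3 n).trans_le ?_
    have hn1 : (0 : ℝ) < (n : ℝ) + 1 := by positivity
    rw [div_le_div_iff₀ (by positivity) hn1]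
    nlinarith
  -- openness of balls and membership in nhds
  have hball : ∀ (w : X) (δ : ℝ), 0 < δ → Q.ball w δ ∈ nhds w := by
    intro w δ hδ
    have hopen : IsOpen (Q.ball w δ) :=
      TopologicalSpace.isOpen_generateFrom_of_mem ⟨w, δ, hδ, rfl⟩
    refine hopen.mem_nhds ?_
    have h0 : Q.d w w = 0 := ((Q.eq_iff w w).mp rfl).1
    simpa [QuasiMetric.ball, h0] using hδ
  refine ⟨fun n => (z n, ((n : ℝ≥0) + 1)⁻¹), ?_, ?_⟩
  · intro n
    rw [hset n]
    exact ⟨n + 1, idx n, by omega, le_rfl, h1 n, h2 n, rfl⟩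
  · have hone : Filter.Tendsto (fun n : ℕ => 1 / ((n : ℝ) + 1)) Filter.atTop (nhds 0) :=
      tendsto_one_div_add_atTop_nhds_zero_nat
    have hA : Filter.Tendsto (fun n => Q.d (z n) x) Filter.atTop (nhds 0) :=
      squeeze_zero (fun n => Q.nonneg _ _) (fun n => (hzx n).le) hone
    have hB : Filter.Tendsto (fun n => Q.d x (z n)) Filter.atTop (nhds 0) := by
      by_contra hcon
      rw [Metric.tendsto_atTop] at hcon
      push_neg at hcon
      obtain ⟨ε, hε, hfr⟩ := hcon
      have hfr' : ∃ᶠ n in Filter.atTop, ε ≤ Q.d x (z n) := by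
        rw [Filter.frequently_atTop]
        intro N
        obtain ⟨n, hn, h⟩ := hfr N
        refine ⟨n, hn, ?_⟩
        rwa [Real.dist_eq, sub_zero, abs_of_nonneg (Q.nonneg x (z n))] at h
      obtain ⟨φ, hφmono, hφ⟩ := Filter.extraction_of_frequently_atTop hfr'
      set u : ℕ → X := fun k => z (φ k) with hu
      have hmap : Filter.map u Filter.atTop ≤ Filter.principal K := by
        rw [Filter.le_principal_iff, Filter.mem_map]
        exact Filter.Eventually.of_forall fun k => hzK (φ k)
      obtain ⟨y, hyK, hyc⟩ := hKcomp.exists_clusterPt hmap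
      have key : ∀ δ : ℝ, 0 < δ → ∀ N : ℕ, ∃ k, N ≤ k ∧ Q.d y (u k) < δ := by
        intro δ hδ N
        have hV : u '' Set.Ici N ∈ Filter.map u Filter.atTop :=
          Filter.image_mem_map (Filter.Ici_mem_atTop N)
        obtain ⟨w, hw1, hw2⟩ := clusterPt_iff_nonempty.mp hyc (hball y δ hδ) hV
        obtain ⟨k, hk, rfl⟩ := hw2
        exact ⟨k, hk, hw1⟩
      have hy0 : Q.d y x = 0 := by
        have hlt : ∀ δ : ℝ, 0 < δ → Q.d y x < δ := by
          intro δ hδ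
          obtain ⟨N, hN⟩ := exists_nat_one_div_lt (half_pos hδ)
          obtain ⟨k, hk, hdy⟩ := key (δ / 2) (half_pos hδ) N
          have hφk : (N : ℝ) ≤ (φ k : ℝ) := by
            exact_mod_cast hk.trans hφmono.le_apply
          have hux : Q.d (u k) x < δ / 2 := by
            refine lt_of_lt_of_le (hzx (φ k)) (le_trans ?_ hN.le)
            apply div_le_div_of_nonneg_left (by norm_num) (by positivity)
            linarith
          calc Q.d y x ≤ Q.d y (u k) + Q.d (u k) x := Q.triangle _ _ _
            _ < δ / 2 + δ / 2 := by linarith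
            _ = δ := by ring
        have := Q.nonneg y x
        by_contra h0
        exact absurd (hlt _ (lt_of_le_of_ne this (Ne.symm h0))) (lt_irrefl _)
      have hyx : y = x := hT1 y x hy0
      subst hyx
      have hV : Set.range u ∈ Filter.map u Filter.atTop := by
        rw [Filter.mem_map]
        exact Filter.Eventually.of_forall fun k => Set.mem_range_self k
      obtain ⟨w, hw1, hw2⟩ := clusterPt_iff_nonempty.mp hyc (hball y ε hε) hV
      obtain ⟨k, rfl⟩ := hw2
      exact absurd hw1 (not_lt.mpr (hφ k))
    have hmax := hA.max hB
    simp only [max_self] at hmax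
    exact hmax.congr fun n => by simp [QuasiMetric.dstar]
end

section
/- Let (X,d) be a sequentially Yoneda-complete T1 bounded quasi-metric space and let K ∈ K_0(X). Then any two standard representations of K are ∼-equivalent ω-chains in P_fin(BX); consequently the class K* is well-defined, i.e., independent of the chosen standard representation. -/
open scoped NNReal

/-! ### Auxiliary lemmas for `stmt3` -/

private lemma real_le_of_eps {a b : ℝ} (h : ∀ ε : ℝ, 0 < ε → a ≤ b + ε) : a ≤ b := by
  by_contra hc
  push_neg at hc
  have := h ((a - b) / 2) (by linarith)
  linarith

private lemma finite_unif {α : Type _} {S : Set α} (hS : S.Finite) (P : α → ℕ → Prop)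
    (h : ∀ a ∈ S, ∃ N, ∀ M, N ≤ M → P a M) : ∃ N, ∀ a ∈ S, ∀ M, N ≤ M → P a M := by
  revert h
  refine Set.Finite.induction_on S hS ?_ ?_
  · intro _; exact ⟨0, by simp⟩
  · intro a s _ _ ih h
    obtain ⟨N1, hN1⟩ := ih (fun b hb => h b (Set.mem_insert_of_mem _ hb))
    obtain ⟨N2, hN2⟩ := h a (Set.mem_insert _ _)
    refine ⟨max N1 N2, ?_⟩
    rintro b (rfl | hb) M hM
    · exact hN2 M (le_trans (le_max_right _ _) hM)
    · exact hN1 b hb M (le_trans (le_max_left _ _) hM)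

namespace QuasiMetric

variable {X : Type}

lemma d_self' (Q : QuasiMetric X) (x : X) : Q.d x x = 0 := ((Q.eq_iff x x).mp rfl).1

lemma yoneda_upper (Q : QuasiMetric X) (hB : Q.Bounded) {u : ℕ → X} {z : X}
    (hz : IsYonedaLim Q.d u z) {R : ℕ → ℝ}
    (hcau : ∀ k l, k ≤ l → Q.d (u k) (u l) ≤ R k) :
    ∀ k y, Q.d (u k) y ≤ Q.d z y + R k := by
  obtain ⟨C, hC⟩ := hB
  have hbdd : ∀ (y : X) (L : ℕ), BddAbove {t | ∃ m, L ≤ m ∧ t = Q.d (u m) y} := by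
    intro y L
    exact ⟨C, by rintro t ⟨m, -, rfl⟩; exact hC _ _⟩
  intro k y
  have key : Q.d (u k) y - R k ≤ sInf (Set.range (supTail Q.d u y)) := by
    apply le_csInf (Set.range_nonempty _)
    rintro t ⟨L, rfl⟩
    have h1 : Q.d (u (max k L)) y ≤ supTail Q.d u y L :=
      le_csSup (hbdd y L) ⟨max k L, le_max_right _ _, rfl⟩
    have h2 := Q.triangle (u k) (u (max k L)) y
    have h3 := hcau k (max k L) (le_max_left _ _)
    linarith
  have hzy := hz y
  linarith [key, hzy.ge, hzy.le]

lemma yoneda_self (Q : QuasiMetric X) (hB : Q.Bounded) {u : ℕ → X} {z : X}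
    (hz : IsYonedaLim Q.d u z) {R : ℕ → ℝ}
    (hcau : ∀ k l, k ≤ l → Q.d (u k) (u l) ≤ R k) :
    ∀ k, Q.d (u k) z ≤ R k := by
  obtain ⟨C, hC⟩ := hB
  have hbdd : ∀ (y : X) (L : ℕ), BddAbove {t | ∃ m, L ≤ m ∧ t = Q.d (u m) y} := by
    intro y L
    exact ⟨C, by rintro t ⟨m, -, rfl⟩; exact hC _ _⟩
  intro k
  apply real_le_of_eps
  intro ε hε
  have h0 : sInf (Set.range (supTail Q.d u z)) = 0 := by
    rw [← hz z, Q.d_self']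
  have hlt : sInf (Set.range (supTail Q.d u z)) < ε := by rw [h0]; exact hε
  obtain ⟨t, ⟨L, rfl⟩, htε⟩ := exists_lt_of_csInf_lt (Set.range_nonempty _) hlt
  have h1 : Q.d (u (max k L)) z ≤ supTail Q.d u z L :=
    le_csSup (hbdd z L) ⟨max k L, le_max_right _ _, rfl⟩
  have h2 := Q.triangle (u k) (u (max k L)) z
  have h3 := hcau k (max k L) (le_max_left _ _)
  linarith

lemma cluster_freq (Q : QuasiMetric X) {K : Set X} (hKc : @IsCompact X Q.tau K)
    (b : ℕ → X) (hb : ∀ m, b m ∈ K) :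
    ∃ β ∈ K, ∀ ε : ℝ, 0 < ε → ∀ N, ∃ m, N ≤ m ∧ Q.d β (b m) < ε := by
  letI : TopologicalSpace X := Q.tau
  haveI : (Filter.map b Filter.atTop).NeBot := Filter.map_neBot
  have hle : Filter.map b Filter.atTop ≤ Filter.principal K := by
    rw [Filter.le_principal_iff, Filter.mem_map]
    exact Filter.univ_mem' hb
  obtain ⟨β, hβK, hcl⟩ := hKc hle
  refine ⟨β, hβK, fun ε hε N => ?_⟩
  have hopen : IsOpen (Q.ball β ε) :=
    TopologicalSpace.GenerateOpen.basic _ ⟨β, ε, hε, rfl⟩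
  have hmem : Q.ball β ε ∈ nhds β := by
    apply hopen.mem_nhds
    show Q.d β β < ε
    rw [Q.d_self']; exact hε
  have hV : b '' Set.Ici N ∈ Filter.map b Filter.atTop :=
    Filter.image_mem_map (Filter.Ici_mem_atTop N)
  obtain ⟨y, hyU, mIdx, hmIdx, rfl⟩ := clusterPt_iff_nonempty.mp hcl hmem hV
  exact ⟨mIdx, hmIdx, hyU⟩

lemma exists_chainSeq (Q : QuasiMetric X) (c : Q.Chain) (n : ℕ) (a : FB X)
    (ha : a ∈ (c.1 n).1) :
    ∃ A : ℕ → FB X, A 0 = a ∧ (∀ k, A k ∈ (c.1 (n + k)).1) ∧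
      ∀ k, Q.blt (A k) (A (k + 1)) := by
  choose f hf1 hf2 using fun (k : ℕ) (b : FB X) (hb : b ∈ (c.1 (n + k)).1) =>
    (c.2 (n + k)).2 b hb
  let g : ∀ k : ℕ, {b : FB X // b ∈ (c.1 (n + k)).1} := fun k =>
    Nat.rec ⟨a, ha⟩ (fun k p => ⟨f k p.1 p.2, hf1 k p.1 p.2⟩) k
  exact ⟨fun k => (g k).1, rfl, fun k => (g k).2, fun k => hf2 k (g k).1 (g k).2⟩

end QuasiMetric
namespace QuasiMetric

variable {X : Type}

lemma key_point (Q : QuasiMetric X) (hT1 : Q.IsT1) (hB : Q.Bounded)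
    (hY : Q.SeqYonedaComplete) (K : Set X) (hK : K ∈ Q.K0) (c c' : Q.Chain)
    (hc : Q.IsStdRep K c) (hc' : Q.IsStdRep K c') (n : ℕ) (a : FB X)
    (ha : a ∈ (c.1 n).1) :
    ∃ N, ∀ M, N ≤ M → ∃ b ∈ (c'.1 M).1, Q.blt a b := by
  obtain ⟨m, x, hxK, hcov, hset⟩ := hc
  obtain ⟨m', x', hxK', hcov', hset'⟩ := hc'
  -- membership/radius facts
  have hmem : ∀ k, ∀ p ∈ (c.1 k).1, p.1 ∈ K ∧ (p.2 : ℝ) = ((k : ℝ) + 1)⁻¹ := by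
    intro k p hp
    rw [hset k] at hp
    obtain ⟨j, i, hj1, hj2, hi1, hi2, rfl⟩ := hp
    refine ⟨hxK j i hj1 hi1 hi2, ?_⟩
    push_cast
    ring
  -- forward chain inside c starting at a
  obtain ⟨A, hA0, hAmem, hAblt⟩ := Q.exists_chainSeq c n a ha
  set u : ℕ → X := fun k => (A k).1 with hudef
  set R : ℕ → ℝ := fun k => (((n + k : ℕ) : ℝ) + 1)⁻¹ with hRdef
  have hR : ∀ k, ((A k).2 : ℝ) = R k := fun k => (hmem (n + k) (A k) (hAmem k)).2
  have huK : ∀ k, u k ∈ K := fun k => (hmem (n + k) (A k) (hAmem k)).1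
  have hRpos : ∀ k, 0 < R k := by
    intro k
    have : (0:ℝ) < ((n + k : ℕ) : ℝ) + 1 := by positivity
    exact inv_pos.mpr this
  have hRanti : ∀ k l, k ≤ l → R l ≤ R k := by
    intro k l h
    simp only [hRdef, ← one_div]
    apply one_div_le_one_div_of_le (by positivity)
    have : (n + k : ℕ) ≤ (n + l : ℕ) := by omega
    exact_mod_cast by exact_mod_cast add_le_add_left (Nat.cast_le.mpr this) (1:ℝ)
  have hblt' : ∀ k, Q.d (u k) (u (k + 1)) < R k - R (k + 1) := by
    intro k
    have h := hAblt k
    unfold QuasiMetric.blt at h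
    rwa [hR k, hR (k + 1)] at h
  have htele : ∀ k l, k ≤ l → Q.d (u k) (u l) ≤ R k - R l := by
    intro k l hkl
    induction l, hkl using Nat.le_induction with
    | base => linarith [Q.d_self' (u k)]
    | succ l hl ih =>
      have t := Q.triangle (u k) (u l) (u (l + 1))
      have := hblt' l
      linarith
  have hcau : ∀ k l, k ≤ l → Q.d (u k) (u l) ≤ R k := fun k l h =>
    le_trans (htele k l h) (by linarith [hRpos l])
  have hCauchy : IsCauchySeq Q.d u := by
    intro ε hε
    obtain ⟨N, hN⟩ := exists_nat_gt (1 / ε)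
    refine ⟨N, fun k l hNk hkl => ?_⟩
    have h1 : Q.d (u k) (u l) ≤ R k := hcau k l hkl
    have h2 : R k ≤ R N := hRanti N k hNk
    have h3 : R N < ε := by
      have hpos : (0:ℝ) < ((n + N : ℕ) : ℝ) + 1 := by positivity
      have hgt : 1 / ε < ((n + N : ℕ) : ℝ) + 1 := by
        have : (N : ℝ) ≤ ((n + N : ℕ) : ℝ) + 1 := by
          push_cast; linarith [(Nat.cast_nonneg n : (0:ℝ) ≤ n)]
        linarith
      have h := one_div_lt_one_div_of_lt (by positivity : (0:ℝ) < 1 / ε) hgt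
      rw [one_div_one_div] at h
      simp only [hRdef]
      rw [← one_div]
      exact h
    linarith
  obtain ⟨z, hz⟩ := hY u hCauchy
  have F2 := Q.yoneda_upper hB hz hcau
  have F1 := Q.yoneda_self hB hz hcau
  -- covering points from c'
  have hcovU : ∀ k : ℕ, ∃ i, 1 ≤ i ∧ i ≤ m' (k + 1) ∧
      Q.d (x' (k + 1) i) (u k) < 1 / (2 * ((k + 1 : ℕ) : ℝ) ^ 2) :=
    fun k => hcov' (k + 1) (by omega) (u k) (huK k)
  choose iB hiB1 hiB2 hiB3 using hcovU
  have hbK : ∀ k, x' (k + 1) (iB k) ∈ K := fun k => hxK' (k + 1) (iB k) (by omega) (hiB1 k) (hiB2 k)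
  obtain ⟨β, hβK, hβ⟩ := Q.cluster_freq hK.2 (fun k => x' (k + 1) (iB k)) hbK
  -- β = z
  have hβle : ∀ y, Q.d β y ≤ Q.d z y := by
    intro y
    apply real_le_of_eps
    intro ε hε
    obtain ⟨N, hN⟩ := exists_nat_gt (3 / ε)
    obtain ⟨mm, hmm1, hmm2⟩ := hβ (ε / 3) (by positivity) N
    have t1 := Q.triangle β (x' (mm + 1) (iB mm)) y
    have t2 := Q.triangle (x' (mm + 1) (iB mm)) (u mm) y
    have t3 := F2 mm y
    have hδ := hiB3 mm
    have hmmpos : (0:ℝ) < (mm : ℝ) + 1 := by positivity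
    have hbase : 1 / ((mm : ℝ) + 1) ≤ ε / 3 := by
      have hNm : (N : ℝ) ≤ (mm : ℝ) := Nat.cast_le.mpr hmm1
      have h3ε : 3 / ε < (mm : ℝ) + 1 := by linarith
      have := one_div_lt_one_div_of_lt (by positivity : (0:ℝ) < 3 / ε) h3ε
      rw [one_div_div] at this
      linarith
    have h1 : 1 / (2 * ((mm + 1 : ℕ) : ℝ) ^ 2) ≤ ε / 3 := by
      have hle : ((mm : ℝ) + 1) ≤ 2 * ((mm + 1 : ℕ) : ℝ) ^ 2 := by
        push_cast; nlinarith [(Nat.cast_nonneg mm : (0:ℝ) ≤ mm)]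
      have := one_div_le_one_div_of_le hmmpos hle
      linarith
    have h2 : R mm ≤ ε / 3 := by
      have hle : ((mm : ℝ) + 1) ≤ ((n + mm : ℕ) : ℝ) + 1 := by
        push_cast; linarith [(Nat.cast_nonneg n : (0:ℝ) ≤ n)]
      have := one_div_le_one_div_of_le hmmpos hle
      simp only [hRdef, ← one_div]
      linarith
    linarith
  have hβz : β = z := by
    apply hT1
    have h1 := hβle z
    rw [Q.d_self'] at h1
    exact le_antisymm h1 (Q.nonneg β z)
  rw [hβz] at hβ
  -- margin
  have hγpos : 0 < R 0 - R 1 - Q.d (u 0) (u 1) := by linarith [hblt' 0]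
  set γ := R 0 - R 1 - Q.d (u 0) (u 1) with hγdef
  have hdz : Q.d (u 0) z ≤ R 0 - γ := by
    have t := Q.triangle (u 0) (u 1) z
    have := F1 1
    simp only [hγdef]
    linarith
  obtain ⟨mq, -, hq⟩ := hβ (γ / 2) (by positivity) 0
  have hpq : Q.d (u 0) (x' (mq + 1) (iB mq)) < R 0 - γ / 2 := by
    have := Q.triangle (u 0) z (x' (mq + 1) (iB mq))
    linarith
  obtain ⟨N₀, hN₀⟩ := exists_nat_gt (2 / γ)
  refine ⟨max N₀ (mq + 1), fun M hM => ?_⟩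
  have hMq : mq + 1 ≤ M + 1 := by
    have := le_trans (le_max_right N₀ (mq + 1)) hM
    omega
  have hMε : 1 / ((M : ℝ) + 1) < γ / 2 := by
    have hNM : (N₀ : ℝ) ≤ (M : ℝ) :=
      Nat.cast_le.mpr (le_trans (le_max_left _ _) hM)
    have h2γ : 2 / γ < (M : ℝ) + 1 := by linarith
    have := one_div_lt_one_div_of_lt (by positivity : (0:ℝ) < 2 / γ) h2γ
    rw [one_div_div] at this
    linarith
  refine ⟨(x' (mq + 1) (iB mq), ((M : ℝ≥0) + 1)⁻¹), ?_, ?_⟩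
  · rw [hset' M]
    exact ⟨mq + 1, iB mq, by omega, hMq, hiB1 mq, hiB2 mq, rfl⟩
  · show Q.d a.1 (x' (mq + 1) (iB mq)) < (a.2 : ℝ) - ((((M : ℝ≥0) + 1)⁻¹ : ℝ≥0) : ℝ)
    have ha2 : (a.2 : ℝ) = R 0 := by
      have := (hmem n a ha).2
      rw [this]
      simp [hRdef]
    have hu0 : u 0 = a.1 := by rw [hudef]; simp [hA0]
    have hcoe : ((((M : ℝ≥0) + 1)⁻¹ : ℝ≥0) : ℝ) = 1 / ((M : ℝ) + 1) := by
      push_cast; rw [one_div]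
    rw [ha2, hcoe, ← hu0]
    linarith

end QuasiMetric
namespace QuasiMetric

variable {X : Type}

lemma stdRep_chainLE (Q : QuasiMetric X) (hT1 : Q.IsT1) (hB : Q.Bounded)
    (hY : Q.SeqYonedaComplete) (K : Set X) (hK : K ∈ Q.K0) (c c' : Q.Chain)
    (hc : Q.IsStdRep K c) (hc' : Q.IsStdRep K c') : Q.chainLE c c' := by
  intro n
  have h1 : ∀ a ∈ (c.1 n).1, ∃ N, ∀ M, N ≤ M → ∃ b ∈ (c'.1 M).1, Q.blt a b :=
    fun a ha => Q.key_point hT1 hB hY K hK c c' hc hc' n a ha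
  obtain ⟨N₁, hN₁⟩ := finite_unif (c.1 n).2.1 _ h1
  refine ⟨max N₁ (2 * (n + 1) ^ 2), ?_, ?_⟩
  · -- every ball of c'.1 M has a ball of c.1 n strictly below it
    obtain ⟨m, x, hxK, hcov, hset⟩ := hc
    obtain ⟨m', x', hxK', hcov', hset'⟩ := hc'
    intro bb hbb
    rw [hset' (max N₁ (2 * (n + 1) ^ 2))] at hbb
    obtain ⟨j, i, hj1, hj2, hi1, hi2, rfl⟩ := hbb
    have hbK : x' j i ∈ K := hxK' j i hj1 hi1 hi2
    obtain ⟨i₀, hi01, hi02, hd⟩ := hcov (n + 1) (by omega) (x' j i) hbK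
    refine ⟨(x (n + 1) i₀, ((n : ℝ≥0) + 1)⁻¹), ?_, ?_⟩
    · rw [hset n]
      exact ⟨n + 1, i₀, by omega, by omega, hi01, hi02, rfl⟩
    · show Q.d (x (n + 1) i₀) (x' j i) <
        ((((n : ℝ≥0) + 1)⁻¹ : ℝ≥0) : ℝ) -
          ((((max N₁ (2 * (n + 1) ^ 2) : ℕ) : ℝ≥0) + 1)⁻¹ : ℝ≥0)
      set M := max N₁ (2 * (n + 1) ^ 2) with hMdef
      have hM : 2 * (n + 1) ^ 2 ≤ M := le_max_right _ _
      have hcoe1 : ((((n : ℝ≥0) + 1)⁻¹ : ℝ≥0) : ℝ) = 1 / ((n : ℝ) + 1) := by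
        push_cast; rw [one_div]
      have hcoe2 : ((((M : ℕ) : ℝ≥0) + 1)⁻¹ : ℝ≥0) = (1 / ((M : ℝ) + 1) : ℝ) := by
        push_cast; rw [one_div]
      rw [hcoe1, hcoe2]
      have hν : (1 : ℝ) ≤ (n : ℝ) + 1 := by
        linarith [(Nat.cast_nonneg n : (0:ℝ) ≤ n)]
      have hνpos : (0 : ℝ) < (n : ℝ) + 1 := by linarith
      have hd' : Q.d (x (n + 1) i₀) (x' j i) < 1 / (2 * ((n : ℝ) + 1) ^ 2) := by
        have := hd
        push_cast at this
        exact this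
      have hMcast : 2 * ((n : ℝ) + 1) ^ 2 ≤ (M : ℝ) := by
        have : ((2 * (n + 1) ^ 2 : ℕ) : ℝ) ≤ (M : ℝ) := Nat.cast_le.mpr hM
        push_cast at this
        linarith
      have hMpos : (0 : ℝ) < 2 * ((n : ℝ) + 1) ^ 2 := by positivity
      have hB1 : 1 / ((M : ℝ) + 1) < 1 / (2 * ((n : ℝ) + 1) ^ 2) :=
        one_div_lt_one_div_of_lt hMpos (by linarith)
      have hmid : 1 / (2 * ((n : ℝ) + 1) ^ 2) ≤
          1 / ((n : ℝ) + 1) - 1 / (2 * ((n : ℝ) + 1) ^ 2) := by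
        rw [le_sub_iff_add_le]
        have hsum : 1 / (2 * ((n : ℝ) + 1) ^ 2) + 1 / (2 * ((n : ℝ) + 1) ^ 2) =
            1 / ((n : ℝ) + 1) ^ 2 := by
          field_simp
          norm_num
        rw [hsum]
        apply one_div_le_one_div_of_le hνpos
        nlinarith
      linarith
  · intro a ha
    exact hN₁ a ha _ (le_max_left _ _)

end QuasiMetric

/-- any two standard representations of a nonempty compact `K` are ∼-equivalent,
hence `K*` is well-defined. -/
theorem stmt3 {X : Type} (Q : QuasiMetric X) (hT1 : Q.IsT1) (hB : Q.Bounded)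
    (hY : Q.SeqYonedaComplete) (K : Set X) (hK : K ∈ Q.K0) (c c' : Q.Chain)
    (hc : Q.IsStdRep K c) (hc' : Q.IsStdRep K c') :
    Q.chainEquiv c c' ∧
      Quotient.mk Q.chainSetoid c = Quotient.mk Q.chainSetoid c' := by
  have h1 := Q.stdRep_chainLE hT1 hB hY K hK c c' hc hc'
  have h2 := Q.stdRep_chainLE hT1 hB hY K hK c' c hc' hc
  exact ⟨⟨h1, h2⟩, Quotient.sound ⟨h1, h2⟩⟩
end

section
/- Let (X,d) be a sequentially Yoneda-complete T1 bounded quasi-metric space and let K ∈ K_0(X). Then ι(K) = (K*)⁺; that is, for any standard representation (F_n) of K, a formal ball (y,s) ∈ BX belongs to ∩_n ↑F_n if and only if s = 0 and y ∈ K. -/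
open scoped NNReal

/-- `ι(K) = (K*)⁺`, i.e. for any standard representation `(F_n)` of `K`,
`(y,s) ∈ ⋂_n ↑F_n` iff `s = 0` and `y ∈ K`. -/
theorem stmt4 {X : Type} (Q : QuasiMetric X) (hT1 : Q.IsT1) (hB : Q.Bounded)
    (hY : Q.SeqYonedaComplete) (K : Set X) (hK : K ∈ Q.K0) (c : Q.Chain)
    (hc : Q.IsStdRep K c) :
    ∀ b : FB X, b ∈ Q.Iplus c ↔ (b.2 = 0 ∧ b.1 ∈ K) := by
  obtain ⟨m, x, hxK, hnet, hset⟩ := hc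
  obtain ⟨hKne, hKcomp⟩ := hK
  intro b
  constructor
  · intro hb
    have hb' : ∀ n, ∃ a ∈ (c.1 n).1, Q.ble a b := fun n => Set.mem_iInter.mp hb n
    -- extract, for each n, a point of K witnessing membership
    have hk : ∀ n : ℕ, ∃ z ∈ K, Q.d z b.1 + (b.2 : ℝ) ≤ ((n : ℝ) + 1)⁻¹ := by
      intro n
      obtain ⟨a, haF, hab⟩ := hb' n
      rw [hset n] at haF
      obtain ⟨j, i, hj1, hjn, hi1, him, rfl⟩ := haF
      refine ⟨x j i, hxK j i hj1 hi1 him, ?_⟩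
      have hble : Q.d (x j i) b.1 ≤ ((((n : ℝ≥0) + 1)⁻¹ : ℝ≥0) : ℝ) - (b.2 : ℝ) := hab
      have hcast : ((((n : ℝ≥0) + 1)⁻¹ : ℝ≥0) : ℝ) = ((n : ℝ) + 1)⁻¹ := by push_cast; ring
      rw [hcast] at hble
      linarith
    choose k hkK hkd using hk
    have hb2 : (b.2 : ℝ) ≤ 0 := by
      have hlim : Filter.Tendsto (fun n : ℕ => 1 / ((n : ℝ) + 1)) Filter.atTop (nhds 0) :=
        tendsto_one_div_add_atTop_nhds_zero_nat
      refine ge_of_tendsto' hlim fun n => ?_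
      have h1 := hkd n
      have h2 := Q.nonneg (k n) b.1
      rw [one_div]
      linarith
    have hb20 : b.2 = 0 := le_antisymm (by exact_mod_cast hb2) zero_le
    refine ⟨hb20, ?_⟩
    -- cluster point of the sequence k in the compact K
    letI : TopologicalSpace X := Q.tau
    have hmap : Filter.map k Filter.atTop ≤ Filter.principal K :=
      Filter.le_principal_iff.mpr (Filter.mem_map.mpr
        (Filter.mem_of_superset (Filter.Ici_mem_atTop 0) (fun n _ => hkK n)))
    obtain ⟨z, hzK, hz⟩ := hKcomp.exists_clusterPt hmap
    have hzz : Q.d z z = 0 := ((Q.eq_iff z z).mp rfl).1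
    have key : ∀ ε : ℝ, 0 < ε → Q.d z b.1 < 2 * ε := by
      intro ε hε
      have hUopen : IsOpen (Q.ball z ε) :=
        TopologicalSpace.GenerateOpen.basic _ ⟨z, ε, hε, rfl⟩
      have hzU : z ∈ Q.ball z ε := by simpa [QuasiMetric.ball, hzz] using hε
      obtain ⟨N, hN⟩ := exists_nat_one_div_lt (ε := ε) hε
      have hV : k '' Set.Ici N ∈ Filter.map k Filter.atTop :=
        Filter.image_mem_map (Filter.Ici_mem_atTop N)
      obtain ⟨w, hwU, hwV⟩ := clusterPt_iff_nonempty.mp hz (hUopen.mem_nhds hzU) hV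
      obtain ⟨n, hn, rfl⟩ := hwV
      have h1 : Q.d z (k n) < ε := hwU
      have h2 : Q.d (k n) b.1 ≤ ((n : ℝ) + 1)⁻¹ := by
        have := hkd n
        have := Q.nonneg (k n) b.1
        have hb2' : (0 : ℝ) ≤ (b.2 : ℝ) := b.2.coe_nonneg
        linarith
      have h3 : ((n : ℝ) + 1)⁻¹ ≤ ((N : ℝ) + 1)⁻¹ := by
        apply inv_anti₀ (by positivity)
        have : (N : ℝ) ≤ (n : ℝ) := by exact_mod_cast hn
        linarith
      have h4 : ((N : ℝ) + 1)⁻¹ < ε := by rwa [one_div] at hN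
      calc Q.d z b.1 ≤ Q.d z (k n) + Q.d (k n) b.1 := Q.triangle _ _ _
        _ < ε + ε := by linarith
        _ = 2 * ε := by ring
    have hd0 : Q.d z b.1 = 0 := by
      by_contra h
      have hpos : 0 < Q.d z b.1 := lt_of_le_of_ne (Q.nonneg z b.1) (Ne.symm h)
      have := key (Q.d z b.1 / 4) (by linarith)
      linarith
    rw [← hT1 z b.1 hd0]
    exact hzK
  · rintro ⟨hs0, hyK⟩
    refine Set.mem_iInter.mpr fun n => ?_
    obtain ⟨i, hi1, him, hd⟩ := hnet (n + 1) (by omega) b.1 hyK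
    refine ⟨(x (n + 1) i, ((n : ℝ≥0) + 1)⁻¹), ?_, ?_⟩
    · rw [hset n]
      exact ⟨n + 1, i, by omega, le_refl _, hi1, him, rfl⟩
    · show Q.d (x (n + 1) i) b.1 ≤ ((((n : ℝ≥0) + 1)⁻¹ : ℝ≥0) : ℝ) - (b.2 : ℝ)
      have hcast : ((((n : ℝ≥0) + 1)⁻¹ : ℝ≥0) : ℝ) = ((n : ℝ) + 1)⁻¹ := by push_cast; ring
      rw [hcast, hs0]
      have hd' : Q.d (x (n + 1) i) b.1 < 1 / (2 * ((n : ℝ) + 1) ^ 2) := by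
        have : ((n + 1 : ℕ) : ℝ) = (n : ℝ) + 1 := by push_cast; ring
        rwa [this] at hd
      have hle : 1 / (2 * ((n : ℝ) + 1) ^ 2) ≤ ((n : ℝ) + 1)⁻¹ := by
        rw [one_div]
        apply inv_anti₀ (by positivity)
        nlinarith [Nat.cast_nonneg (α := ℝ) n]
      push_cast
      linarith
end

section
/- Let (X,d) be a sequentially Yoneda-complete T1 bounded quasi-metric space and let K, L ∈ K_0(X). If K* ⊑ L* in CBX, then L ⊆ K ⊆ cl_{τ_d}(L), where cl_{τ_d}(L) is the closure of L in the topology τ_d. -/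
open scoped NNReal

namespace QuasiMetric

variable {X : Type} (Q : QuasiMetric X)

protected lemma QM_d_self (x : X) : Q.d x x = 0 := ((Q.eq_iff x x).mp rfl).1

lemma QM_coe_inv_succ (n : ℕ) : ((((n : ℝ≥0) + 1)⁻¹ : ℝ≥0) : ℝ) = ((n : ℝ) + 1)⁻¹ := by
  push_cast
  ring

lemma QM_inv_succ_pos (n : ℕ) : (0:ℝ) < ((n : ℝ) + 1)⁻¹ := by positivity

protected lemma QM_ball_open {x : X} {ε : ℝ} (hε : 0 < ε) : @IsOpen X Q.tau (Q.ball x ε) :=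
  TopologicalSpace.isOpen_generateFrom_of_mem ⟨x, ε, hε, rfl⟩

lemma QM_exists_ball_subset {U : Set X} (hU : @IsOpen X Q.tau U) :
    ∀ p ∈ U, ∃ ε : ℝ, 0 < ε ∧ Q.ball p ε ⊆ U := by
  have h : TopologicalSpace.GenerateOpen {s | ∃ x ε, 0 < ε ∧ s = Q.ball x ε} U := hU
  clear hU
  induction h with
  | basic s hs =>
      obtain ⟨x, ε, hε, rfl⟩ := hs
      intro p hp
      simp only [QuasiMetric.ball, Set.mem_setOf_eq] at hp
      refine ⟨ε - Q.d x p, by linarith, ?_⟩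
      intro y hy
      simp only [QuasiMetric.ball, Set.mem_setOf_eq] at hy ⊢
      have := Q.triangle x p y
      linarith
  | univ => exact fun p _ => ⟨1, one_pos, fun y _ => trivial⟩
  | inter s t _ _ ih1 ih2 =>
      intro p hp
      obtain ⟨ε1, h1, hs⟩ := ih1 p hp.1
      obtain ⟨ε2, h2, ht⟩ := ih2 p hp.2
      refine ⟨min ε1 ε2, lt_min h1 h2, fun y hy => ?_⟩
      simp only [QuasiMetric.ball, Set.mem_setOf_eq] at hy
      exact ⟨hs (by simp only [QuasiMetric.ball, Set.mem_setOf_eq]; exact lt_of_lt_of_le hy (min_le_left _ _)),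
             ht (by simp only [QuasiMetric.ball, Set.mem_setOf_eq]; exact lt_of_lt_of_le hy (min_le_right _ _))⟩
  | sUnion S _ ih =>
      intro p hp
      obtain ⟨s, hsS, hps⟩ := hp
      obtain ⟨ε, hε, hsub⟩ := ih s hsS p hps
      exact ⟨ε, hε, fun y hy => ⟨s, hsS, hsub hy⟩⟩

lemma QM_exists_cluster {S : Set X} (hS : @IsCompact X Q.tau S) (w : ℕ → X)
    (hw : ∀ n, w n ∈ S) :
    ∃ z ∈ S, ∀ ε : ℝ, 0 < ε → ∀ N : ℕ, ∃ n, N ≤ n ∧ Q.d z (w n) < ε := by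
  letI : TopologicalSpace X := Q.tau
  have hf : Filter.map w Filter.atTop ≤ Filter.principal S := by
    rw [Filter.le_principal_iff, Filter.mem_map]
    exact Filter.Eventually.of_forall hw
  obtain ⟨z, hzS, hz⟩ := hS.exists_clusterPt hf
  refine ⟨z, hzS, ?_⟩
  intro ε hε N
  have hball : Q.ball z ε ∈ @nhds X Q.tau z := by
    refine ((Q.QM_ball_open) hε).mem_nhds ?_
    simp only [QuasiMetric.ball, Set.mem_setOf_eq, Q.QM_d_self]
    exact hε
  have htail : {y | ∃ n, N ≤ n ∧ w n = y} ∈ Filter.map w Filter.atTop := by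
    rw [Filter.mem_map]
    filter_upwards [Filter.mem_atTop N] with n hn
    exact ⟨n, hn, rfl⟩
  haveI hne : (nhds z ⊓ Filter.map w Filter.atTop).NeBot := hz
  have hmem : (Q.ball z ε ∩ {y | ∃ n, N ≤ n ∧ w n = y}) ∈
      (nhds z ⊓ Filter.map w Filter.atTop) :=
    Filter.inter_mem (Filter.mem_inf_of_left hball) (Filter.mem_inf_of_right htail)
  obtain ⟨y, hy1, n, hn, rfl⟩ := Filter.nonempty_of_mem hmem
  simp only [QuasiMetric.ball, Set.mem_setOf_eq] at hy1
  exact ⟨n, hn, hy1⟩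

end QuasiMetric

namespace QuasiMetric

lemma QM_inv_lt_of_nat {c : ℝ} (hc : 0 < c) {t n : ℕ} (ht : c⁻¹ < t) (hn : t ≤ n) :
    ((n : ℝ) + 1)⁻¹ < c := by
  have h2 : c⁻¹ < (n : ℝ) + 1 := by
    have : (t : ℝ) ≤ n := Nat.cast_le.mpr hn
    linarith
  have h3 : ((n : ℝ) + 1)⁻¹ < (c⁻¹)⁻¹ := by
    apply inv_strictAnti₀ (inv_pos.mpr hc) h2
  rwa [inv_inv] at h3

end QuasiMetric

/-- `K* ⊑ L*` in `CBX` implies `L ⊆ K ⊆ cl_{τ_d}(L)`. -/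
theorem stmt6 {X : Type} (Q : QuasiMetric X) (hT1 : Q.IsT1) (hB : Q.Bounded)
    (hY : Q.SeqYonedaComplete) (K L : Set X) (hK : K ∈ Q.K0) (hL : L ∈ Q.K0)
    (cK cL : Q.Chain) (hcK : Q.IsStdRep K cK) (hcL : Q.IsStdRep L cL)
    (hle : Q.cbLE (Quotient.mk Q.chainSetoid cK) (Quotient.mk Q.chainSetoid cL)) :
    L ⊆ K ∧ K ⊆ @closure X Q.tau L := by
  obtain ⟨mK, xK, hxKmem, hxKcov, hKdesc⟩ := hcK
  obtain ⟨mL, xL, hxLmem, hxLcov, hLdesc⟩ := hcL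
  have hle' : Q.chainLE cK cL := hle
  obtain ⟨-, hKcomp⟩ := hK
  -- elements of the chains: centers lie in K (resp. L), radii are 1/(n+1)
  have hKelem : ∀ n, ∀ a ∈ (cK.1 n).1, a.1 ∈ K ∧ (a.2 : ℝ) = ((n : ℝ) + 1)⁻¹ := by
    intro n a ha
    rw [hKdesc n] at ha
    obtain ⟨j, i, hj1, hj2, hi1, hi2, rfl⟩ := ha
    exact ⟨hxKmem j i hj1 hi1 hi2, QuasiMetric.QM_coe_inv_succ n⟩
  have hLelem : ∀ n, ∀ a ∈ (cL.1 n).1, a.1 ∈ L ∧ (a.2 : ℝ) = ((n : ℝ) + 1)⁻¹ := by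
    intro n a ha
    rw [hLdesc n] at ha
    obtain ⟨j, i, hj1, hj2, hi1, hi2, rfl⟩ := ha
    exact ⟨hxLmem j i hj1 hi1 hi2, QuasiMetric.QM_coe_inv_succ n⟩
  have hLmem' : ∀ n j i, 1 ≤ j → j ≤ n + 1 → 1 ≤ i → i ≤ mL j →
      ((xL j i, ((n : ℝ≥0) + 1)⁻¹) : FB X) ∈ (cL.1 n).1 := by
    intro n j i h1 h2 h3 h4
    rw [hLdesc n]
    exact ⟨j, i, h1, h2, h3, h4, rfl⟩
  have hKmem' : ∀ n j i, 1 ≤ j → j ≤ n + 1 → 1 ≤ i → i ≤ mK j →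
      ((xK j i, ((n : ℝ≥0) + 1)⁻¹) : FB X) ∈ (cK.1 n).1 := by
    intro n j i h1 h2 h3 h4
    rw [hKdesc n]
    exact ⟨j, i, h1, h2, h3, h4, rfl⟩
  -- em (cK n) (cL m) forces n < m
  have hlevel : ∀ n m, Q.em (cK.1 n) (cL.1 m) → n < m := by
    intro n m hem
    obtain ⟨b0, hb0⟩ := (cL.1 m).2.2
    obtain ⟨a0, ha0, hblt⟩ := hem.1 b0 hb0
    have hA := (hKelem n a0 ha0).2
    have hB := (hLelem m b0 hb0).2
    have hd := Q.nonneg a0.1 b0.1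
    unfold QuasiMetric.blt at hblt
    rw [hA, hB] at hblt
    have h1 : ((m : ℝ) + 1)⁻¹ < ((n : ℝ) + 1)⁻¹ := by linarith
    have h2 : ((n : ℝ) + 1) < ((m : ℝ) + 1) := by
      by_contra h
      push_neg at h
      have := inv_anti₀ (by positivity) h
      linarith
    have : (n : ℝ) < m := by linarith
    exact_mod_cast this
  -- (E): from every K-center, L-points are forward-reachable at arbitrarily small distance
  have hE : ∀ j i, 1 ≤ j → 1 ≤ i → i ≤ mK j → ∀ η : ℝ, 0 < η →
      ∃ l ∈ L, Q.d (xK j i) l < η := by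
    intro j i hj hi1 hi2 η hη
    obtain ⟨t, ht⟩ := exists_nat_gt (η⁻¹)
    set n := max j t with hn
    have hinv : ((n : ℝ) + 1)⁻¹ < η :=
      QuasiMetric.QM_inv_lt_of_nat hη ht (le_max_right j t)
    obtain ⟨m, hem⟩ := hle' n
    have hmemb := hKmem' n j i hj (le_trans (le_max_left j t) (Nat.le_succ n)) hi1 hi2
    obtain ⟨b, hb, hblt⟩ := hem.2 _ hmemb
    have hB := hLelem m b hb
    unfold QuasiMetric.blt at hblt
    have hcoe : ((((n : ℝ≥0) + 1)⁻¹ : ℝ≥0) : ℝ) = ((n : ℝ) + 1)⁻¹ :=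
      QuasiMetric.QM_coe_inv_succ n
    have hbn : (0 : ℝ) ≤ (b.2 : ℝ) := b.2.coe_nonneg
    refine ⟨b.1, hB.1, ?_⟩
    have : Q.d (xK j i) b.1 < ((n : ℝ) + 1)⁻¹ := by
      have h' : Q.d (xK j i) b.1 <
          ((((n : ℝ≥0) + 1)⁻¹ : ℝ≥0) : ℝ) - (b.2 : ℝ) := hblt
      rw [hcoe] at h'
      linarith
    linarith
  -- approximation of points of L by points of K
  have happrox : ∀ y ∈ L, ∀ η : ℝ, 0 < η → ∃ w ∈ K, Q.d w y < η := by
    intro y hy η hη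
    have hη2 : 0 < η / 2 := by linarith
    obtain ⟨t, ht⟩ := exists_nat_gt ((η / 2)⁻¹)
    set n := max 1 t with hndef
    have hn1 : 1 ≤ n := le_max_left _ _
    have hinv : ((n : ℝ) + 1)⁻¹ < η / 2 :=
      QuasiMetric.QM_inv_lt_of_nat hη2 ht (le_max_right 1 t)
    obtain ⟨i, hi1, hi2, hdi⟩ := hxLcov n hn1 y hy
    have hn1R : (1 : ℝ) ≤ (n : ℝ) := by exact_mod_cast hn1
    have hcov2 : Q.d (xL n i) y < η / 2 := by
      have hle2 : 1 / (2 * (n : ℝ) ^ 2) ≤ ((n : ℝ) + 1)⁻¹ := by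
        rw [div_le_iff₀ (by positivity), inv_mul_eq_div, le_div_iff₀ (by positivity)]
        nlinarith
      linarith
    obtain ⟨m, hem⟩ := hle' n
    have hnm : n < m := hlevel n m hem
    have hmemb := hLmem' m n i hn1 (by omega) hi1 hi2
    obtain ⟨a, ha, hblt⟩ := hem.1 _ hmemb
    have hA := hKelem n a ha
    unfold QuasiMetric.blt at hblt
    rw [hA.2] at hblt
    have hbn : (0 : ℝ) ≤ ((((m : ℝ≥0) + 1)⁻¹ : ℝ≥0) : ℝ) := NNReal.coe_nonneg _
    have hda : Q.d a.1 (xL n i) < ((n : ℝ) + 1)⁻¹ := by linarith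
    refine ⟨a.1, hA.1, ?_⟩
    have htr := Q.triangle a.1 (xL n i) y
    linarith
  -- L ⊆ K
  have hLK : L ⊆ K := by
    intro y hy
    have hch : ∀ n : ℕ, ∃ w, w ∈ K ∧ Q.d w y < ((n : ℝ) + 1)⁻¹ := by
      intro n
      obtain ⟨w, hw, h⟩ := happrox y hy _ (QuasiMetric.QM_inv_succ_pos n)
      exact ⟨w, hw, h⟩
    choose w hwK hwd using hch
    obtain ⟨z, hzK, hz⟩ := Q.QM_exists_cluster hKcomp w hwK
    have hzy : Q.d z y = 0 := by
      by_contra h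
      have hpos : 0 < Q.d z y := lt_of_le_of_ne (Q.nonneg _ _) (Ne.symm h)
      have hpos2 : 0 < Q.d z y / 2 := by linarith
      obtain ⟨t, ht⟩ := exists_nat_gt ((Q.d z y / 2)⁻¹)
      obtain ⟨n, hn, hzn⟩ := hz (Q.d z y / 2) hpos2 t
      have h1 : ((n : ℝ) + 1)⁻¹ < Q.d z y / 2 :=
        QuasiMetric.QM_inv_lt_of_nat hpos2 ht hn
      have htr := Q.triangle z (w n) y
      have := hwd n
      linarith
    exact hT1 z y hzy ▸ hzK
  refine ⟨hLK, ?_⟩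
  -- K ⊆ closure L
  intro k hk
  have hch : ∀ n : ℕ, ∃ e, e ∈ K ∧ Q.d e k < ((n : ℝ) + 1)⁻¹ ∧
      ∀ η : ℝ, 0 < η → ∃ l ∈ L, Q.d e l < η := by
    intro n
    obtain ⟨i, hi1, hi2, hdi⟩ := hxKcov (n + 1) (Nat.le_add_left 1 n) k hk
    refine ⟨xK (n + 1) i, hxKmem _ _ (by omega) hi1 hi2, ?_,
      fun η hη => hE (n + 1) i (by omega) hi1 hi2 η hη⟩
    have hcast : ((n + 1 : ℕ) : ℝ) = (n : ℝ) + 1 := by push_cast; ring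
    rw [hcast] at hdi
    have hle2 : 1 / (2 * ((n : ℝ) + 1) ^ 2) ≤ ((n : ℝ) + 1)⁻¹ := by
      rw [div_le_iff₀ (by positivity), inv_mul_eq_div, le_div_iff₀ (by positivity)]
      have : (0:ℝ) ≤ (n : ℝ) := Nat.cast_nonneg n
      nlinarith
    linarith
  choose e heK hek hef using hch
  obtain ⟨z, hzK, hz⟩ := Q.QM_exists_cluster hKcomp e heK
  have hzk : z = k := by
    apply hT1
    by_contra h
    have hpos : 0 < Q.d z k := lt_of_le_of_ne (Q.nonneg _ _) (Ne.symm h)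
    have hpos2 : 0 < Q.d z k / 2 := by linarith
    obtain ⟨t, ht⟩ := exists_nat_gt ((Q.d z k / 2)⁻¹)
    obtain ⟨n, hn, hzn⟩ := hz (Q.d z k / 2) hpos2 t
    have h1 : ((n : ℝ) + 1)⁻¹ < Q.d z k / 2 :=
      QuasiMetric.QM_inv_lt_of_nat hpos2 ht hn
    have := hek n
    have htr := Q.triangle z (e n) k
    linarith
  subst hzk
  have hkey : ∀ ε : ℝ, 0 < ε → ∃ l ∈ L, Q.d z l < ε := by
    intro ε hε
    have hε2 : 0 < ε / 2 := by linarith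
    obtain ⟨n, -, hzn⟩ := hz (ε / 2) hε2 0
    obtain ⟨l, hl, hdl⟩ := hef n (ε / 2) hε2
    refine ⟨l, hl, ?_⟩
    have htr := Q.triangle z (e n) l
    linarith
  letI : TopologicalSpace X := Q.tau
  rw [mem_closure_iff]
  intro o ho hko
  obtain ⟨ε, hε, hsub⟩ := Q.QM_exists_ball_subset ho z hko
  obtain ⟨l, hl, hdl⟩ := hkey ε hε
  refine ⟨l, hsub ?_, hl⟩
  simpa [QuasiMetric.ball] using hdl
end

section
/- Let (X,d) be a sequentially Yoneda-complete T1 bounded quasi-metric space. Then the map φ : K_0(X) → CBX, φ(K) = K*, is a topological embedding (injective, continuous, and a homeomorphism onto its image) from K_0(X) equipped with the Vietoris topology into CBX equipped with the Scott topology. -/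
open scoped NNReal

namespace StmtNine

open TopologicalSpace
open scoped Topology

variable {X : Type} (Q : QuasiMetric X)

lemma d_self (x : X) : Q.d x x = 0 := ((Q.eq_iff x x).mp rfl).1

lemma coe_rad (n : ℕ) : ((((n : ℝ≥0) + 1)⁻¹ : ℝ≥0) : ℝ) = ((n : ℝ) + 1)⁻¹ := by
  push_cast
  ring

lemma rad_pos (n : ℕ) : (0:ℝ) < ((n : ℝ) + 1)⁻¹ := by positivity

lemma num1 (n : ℕ) : 1 / (2 * ((n : ℝ) + 1) ^ 2) ≤ ((n : ℝ) + 1)⁻¹ - ((n : ℝ) + 2)⁻¹ := by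
  have h1 : (0:ℝ) < (n:ℝ) + 1 := by positivity
  have h2 : (0:ℝ) < (n:ℝ) + 2 := by positivity
  have key : ((n : ℝ) + 1)⁻¹ - ((n : ℝ) + 2)⁻¹ = (((n:ℝ)+1) * ((n:ℝ)+2))⁻¹ := by
    field_simp
    ring
  rw [key, one_div, inv_le_inv₀ (by positivity) (by positivity)]
  nlinarith

lemma num2 (n : ℕ) : 1 / (2 * ((n : ℝ) + 1) ^ 2) < ((n : ℝ) + 1)⁻¹ := by
  have h1 : (0:ℝ) < (n:ℝ) + 1 := by positivity
  rw [one_div, inv_lt_inv₀ (by positivity) (by positivity)]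
  nlinarith

lemma gap_pos (n : ℕ) : (0:ℝ) < ((n : ℝ) + 1)⁻¹ - ((n : ℝ) + 2)⁻¹ := by
  have := num1 n
  have : (0:ℝ) < 1 / (2 * ((n : ℝ) + 1) ^ 2) := by positivity
  linarith [num1 n]

lemma num4 (m : ℕ) : ((m : ℝ) + 1)⁻¹ - ((2 * m + 1 : ℕ) + 1 : ℝ)⁻¹ = (2 * ((m:ℝ) + 1))⁻¹ := by
  push_cast
  have h1 : (0:ℝ) < (m:ℝ) + 1 := by positivity
  field_simp
  ring

lemma hcast_succ (n : ℕ) : (((n+1 : ℕ) : ℝ≥0) : ℝ≥0) = ((n : ℝ≥0) + 1) := by push_cast; ring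

lemma isOpen_ball {x : X} {ε : ℝ} (hε : 0 < ε) : IsOpen[Q.tau] (Q.ball x ε) :=
  TopologicalSpace.GenerateOpen.basic _ ⟨x, ε, hε, rfl⟩

lemma ball_subset_ball {x y : X} {ε : ℝ} (h : Q.d x y < ε) :
    Q.ball y (ε - Q.d x y) ⊆ Q.ball x ε := by
  intro z hz
  have := Q.triangle x y z
  simp only [QuasiMetric.ball, Set.mem_setOf_eq] at hz ⊢
  linarith

lemma mem_ball_self {x : X} {ε : ℝ} (hε : 0 < ε) : x ∈ Q.ball x ε := by
  simp [QuasiMetric.ball, d_self, hε]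

lemma exists_ball_subset {V : Set X} (hV : IsOpen[Q.tau] V) :
    ∀ y ∈ V, ∃ r : ℝ, 0 < r ∧ Q.ball y r ⊆ V := by
  induction hV with
  | basic s hs =>
      obtain ⟨x, ε, hε, rfl⟩ := hs
      intro y hy
      have hy' : Q.d x y < ε := hy
      exact ⟨ε - Q.d x y, by linarith, ball_subset_ball Q hy'⟩
  | univ => exact fun y _ => ⟨1, one_pos, by simp⟩
  | inter s t _ _ ihs iht =>
      intro y hy
      obtain ⟨r1, hr1, h1⟩ := ihs y hy.1
      obtain ⟨r2, hr2, h2⟩ := iht y hy.2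
      refine ⟨min r1 r2, lt_min hr1 hr2, fun z hz => ⟨h1 ?_, h2 ?_⟩⟩
      · exact lt_of_lt_of_le (show Q.d y z < min r1 r2 from hz) (min_le_left _ _)
      · exact lt_of_lt_of_le (show Q.d y z < min r1 r2 from hz) (min_le_right _ _)
  | sUnion S _ ih =>
      intro y hy
      obtain ⟨s, hs, hys⟩ := hy
      obtain ⟨r, hr, h⟩ := ih s hs y hys
      exact ⟨r, hr, fun z hz => ⟨s, hs, h hz⟩⟩

lemma mem_of_approx (hT1 : Q.IsT1) {K : Set X} (hKc : @IsCompact X Q.tau K) {y : X}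
    (h : ∀ ε : ℝ, 0 < ε → ∃ k ∈ K, Q.d k y < ε) : y ∈ K := by
  letI : TopologicalSpace X := Q.tau
  by_contra hy
  have hpos : ∀ w ∈ K, 0 < Q.d w y := by
    intro w hw
    rcases lt_or_eq_of_le (Q.nonneg w y) with h' | h'
    · exact h'
    · exact absurd (hT1 w y h'.symm ▸ hw) hy
  have hcov : K ⊆ ⋃ w ∈ K, Q.ball w (Q.d w y / 2) := by
    intro w hw
    exact Set.mem_biUnion hw (mem_ball_self Q (by linarith [hpos w hw]))
  obtain ⟨F, hFK, hFfin, hFcov⟩ := hKc.elim_finite_subcover_image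
    (fun w hw => isOpen_ball Q (by linarith [hpos w hw])) hcov
  by_cases hFne : F.Nonempty
  · obtain ⟨δ, hδpos, hδ⟩ : ∃ δ : ℝ, 0 < δ ∧ ∀ w ∈ F, δ ≤ Q.d w y / 2 := by
      obtain ⟨w0, hw0⟩ := hFne
      refine ⟨hFfin.toFinset.inf' ⟨w0, hFfin.mem_toFinset.mpr hw0⟩ (fun w => Q.d w y / 2), ?_, ?_⟩
      · apply Finset.lt_inf'_iff _ |>.mpr
        intro w hw
        have := hpos w (hFK (hFfin.mem_toFinset.mp hw))
        linarith
      · intro w hw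
        exact Finset.inf'_le _ (hFfin.mem_toFinset.mpr hw)
    obtain ⟨k, hk, hky⟩ := h δ hδpos
    obtain ⟨w, hw, hkw⟩ := Set.mem_iUnion₂.mp (hFcov hk)
    have h1 : Q.d w k < Q.d w y / 2 := hkw
    have h2 := Q.triangle w k y
    have h3 := hδ w hw
    linarith
  · obtain ⟨k, hk, _⟩ := h 1 one_pos
    have := hFcov hk
    simp [Set.not_nonempty_iff_eq_empty.mp hFne] at this

lemma precompact_of_compact {K : Set X} (hKc : @IsCompact X Q.tau K) {ε : ℝ} (hε : 0 < ε) :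
    ∃ S : Set X, S.Finite ∧ S ⊆ K ∧ ∀ k ∈ K, ∃ x ∈ S, Q.d x k < ε := by
  letI : TopologicalSpace X := Q.tau
  have hcov : K ⊆ ⋃ w ∈ K, Q.ball w ε := fun w hw => Set.mem_biUnion hw (mem_ball_self Q hε)
  obtain ⟨F, hFK, hFfin, hFcov⟩ := hKc.elim_finite_subcover_image
    (fun w _ => isOpen_ball Q hε) hcov
  refine ⟨F, hFfin, hFK, fun k hk => ?_⟩
  obtain ⟨w, hw, hkw⟩ := Set.mem_iUnion₂.mp (hFcov hk)
  exact ⟨w, hw, hkw⟩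

lemma finite_min {α : Type _} {S : Set α} (hS : S.Finite) (f : α → ℝ) (c : ℝ)
    (h : ∀ n : ℕ, ∃ a ∈ S, f a < c + ((n : ℝ) + 1)⁻¹) : ∃ a ∈ S, f a ≤ c := by
  by_contra hc
  push_neg at hc
  obtain ⟨a0, ha0, _⟩ := h 0
  have hne : hS.toFinset.Nonempty := ⟨a0, hS.mem_toFinset.mpr ha0⟩
  set δ := hS.toFinset.inf' hne (fun a => f a - c) with hδ
  have hδpos : 0 < δ := by
    apply Finset.lt_inf'_iff _ |>.mpr
    intro a ha
    have := hc a (hS.mem_toFinset.mp ha)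
    linarith
  obtain ⟨n, hn⟩ := exists_nat_one_div_lt hδpos
  obtain ⟨a, ha, hfa⟩ := h n
  have h1 : δ ≤ f a - c := Finset.inf'_le _ (hS.mem_toFinset.mpr ha)
  rw [one_div] at hn
  linarith

lemma exists_stdChain (K A : Set X) (hKne : K.Nonempty) (hKc : @IsCompact X Q.tau K)
    (hA : A.Finite) (hAK : A ⊆ K) :
    ∃ c : Q.Chain, Q.IsStdRep K c ∧
      (∀ n p, p ∈ (c.1 n).1 → p.1 ∈ K ∧ p.2 = ((n : ℝ≥0) + 1)⁻¹) ∧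
      (∀ n a, a ∈ A → ((a, ((n : ℝ≥0) + 1)⁻¹) : FB X) ∈ (c.1 n).1) ∧
      (∀ n y, y ∈ K → ∃ p ∈ (c.1 n).1, Q.d p.1 y < 1 / (2 * ((n : ℝ) + 1) ^ 2)) := by
  classical
  obtain ⟨k0, hk0⟩ := hKne
  have hnet : ∀ j : ℕ, ∃ S : Set X, S.Finite ∧ S ⊆ K ∧ (A ∪ {k0}) ⊆ S ∧
      (1 ≤ j → ∀ y ∈ K, ∃ z ∈ S, Q.d z y < 1 / (2 * (j : ℝ) ^ 2)) := by
    intro j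
    by_cases hj : 1 ≤ j
    · have hjR : (0:ℝ) < (j:ℝ) := by exact_mod_cast hj
      have hεpos : (0:ℝ) < 1 / (2 * (j : ℝ) ^ 2) := by positivity
      obtain ⟨S, hSfin, hSK, hScov⟩ := precompact_of_compact Q hKc hεpos
      refine ⟨S ∪ (A ∪ {k0}), hSfin.union (hA.union (Set.finite_singleton _)),
        Set.union_subset hSK (Set.union_subset hAK (by simpa using hk0)),
        Set.subset_union_right, ?_⟩
      intro _ y hy
      obtain ⟨z, hz, hzy⟩ := hScov y hy
      exact ⟨z, Set.mem_union_left _ hz, hzy⟩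
    · exact ⟨A ∪ {k0}, hA.union (Set.finite_singleton _),
        Set.union_subset hAK (by simpa using hk0), le_refl _, fun h => absurd h hj⟩
  choose S hSfin hSK hSsup hScov using hnet
  have hk0S : ∀ j, k0 ∈ S j := fun j => hSsup j (Set.mem_union_right _ rfl)
  let l : ℕ → List X := fun j => (hSfin j).toFinset.toList
  have mem_l : ∀ j z, z ∈ l j ↔ z ∈ S j := by
    intro j z
    simp [l, Set.Finite.mem_toFinset]
  let m : ℕ → ℕ := fun j => (l j).length
  let xx : ℕ → ℕ → X := fun j i => (l j).getD (i - 1) k0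
  have m_pos : ∀ j, 1 ≤ m j := by
    intro j
    have h1 : k0 ∈ l j := (mem_l j k0).mpr (hk0S j)
    have := List.ne_nil_of_mem h1
    exact List.length_pos_iff.mpr this
  have xx_mem : ∀ j i, 1 ≤ i → i ≤ m j → xx j i ∈ S j := by
    intro j i h1 h2
    have hlt : i - 1 < (l j).length := by
      simp only [m] at h2; omega
    have he : xx j i = (l j)[i-1] := List.getD_eq_getElem _ _ hlt
    rw [he, ← mem_l]
    exact List.getElem_mem _
  have exists_idx : ∀ j z, z ∈ S j → ∃ i, 1 ≤ i ∧ i ≤ m j ∧ xx j i = z := by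
    intro j z hz
    obtain ⟨k, hk, he⟩ := List.mem_iff_getElem.mp ((mem_l j z).mpr hz)
    refine ⟨k + 1, by omega, hk, ?_⟩
    have h2 : (k+1) - 1 = k := rfl
    simp only [xx, h2]
    rw [List.getD_eq_getElem _ _ hk]
    exact he
  let rad : ℕ → ℝ≥0 := fun n => ((n : ℝ≥0) + 1)⁻¹
  have hrad : ∀ n : ℕ, ((rad n : ℝ≥0) : ℝ) = ((n:ℝ)+1)⁻¹ := fun n => coe_rad n
  let Fset : ℕ → Set (FB X) := fun n =>
    {p | ∃ j i, 1 ≤ j ∧ j ≤ n + 1 ∧ 1 ≤ i ∧ i ≤ m j ∧ p = (xx j i, rad n)}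
  have hFfin : ∀ n, (Fset n).Finite := by
    intro n
    have hsub : Fset n ⊆ (fun q : ℕ × ℕ => ((xx q.1 q.2, rad n) : FB X)) ''
        (Set.Icc 1 (n+1) ×ˢ Set.Icc 1 ((Finset.range (n+2)).sup m)) := by
      rintro p ⟨j, i, hj1, hj2, hi1, hi2, rfl⟩
      exact ⟨(j, i), ⟨⟨hj1, hj2⟩,
        ⟨hi1, hi2.trans (Finset.le_sup (Finset.mem_range.mpr (by omega)))⟩⟩, rfl⟩
    exact (((Set.finite_Icc _ _).prod (Set.finite_Icc _ _)).image _).subset hsub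
  have hFne : ∀ n, (Fset n).Nonempty := fun n =>
    ⟨(xx 1 1, rad n), 1, 1, le_refl _, by omega, le_refl _, m_pos 1, rfl⟩
  have hblt : ∀ (u v : X) (n n' : ℕ), Q.d u v < ((n:ℝ)+1)⁻¹ - ((n':ℝ)+1)⁻¹ →
      Q.blt (u, rad n) (v, rad n') := by
    intro u v n n' h
    show Q.d u v < ((rad n : ℝ≥0) : ℝ) - ((rad n' : ℝ≥0) : ℝ)
    rw [hrad, hrad]
    exact h
  have hcast : ∀ n : ℕ, (((n+1 : ℕ) : ℝ)) = (n:ℝ)+1 := by intro n; push_cast; ring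
  have hgap : ∀ n : ℕ, 1 / (2*((n:ℝ)+1)^2) ≤ ((n:ℝ)+1)⁻¹ - ((n:ℝ)+1+1)⁻¹ := by
    intro n
    have hE : ((n:ℝ)+1+1) = ((n:ℝ)+2) := by ring
    rw [hE]
    exact num1 n
  have hgap0 : ∀ n : ℕ, (0:ℝ) < ((n:ℝ)+1)⁻¹ - ((n:ℝ)+1+1)⁻¹ := by
    intro n
    have h1 : (0:ℝ) < 1 / (2*((n:ℝ)+1)^2) := by positivity
    linarith [hgap n]
  have hem : ∀ n, Q.em ⟨Fset n, hFfin n, hFne n⟩ ⟨Fset (n+1), hFfin (n+1), hFne (n+1)⟩ := by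
    intro n
    constructor
    · rintro b ⟨j, i, hj1, hj2, hi1, hi2, rfl⟩
      by_cases hj : j ≤ n + 1
      · refine ⟨(xx j i, rad n), ⟨j, i, hj1, hj, hi1, hi2, rfl⟩, ?_⟩
        apply hblt
        rw [d_self, hcast n]
        exact hgap0 n
      · have hj' : j = n + 2 := by omega
        subst hj'
        have hyK : xx (n+2) i ∈ K := hSK _ (xx_mem _ _ hi1 hi2)
        obtain ⟨z, hz, hzy⟩ := hScov (n+1) (by omega) (xx (n+2) i) hyK
        obtain ⟨i', hi'1, hi'2, hxz⟩ := exists_idx (n+1) z hz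
        refine ⟨(xx (n+1) i', rad n), ⟨n+1, i', by omega, by omega, hi'1, hi'2, rfl⟩, ?_⟩
        apply hblt
        rw [hxz]
        calc Q.d z (xx (n+2) i) < 1 / (2*(((n+1:ℕ)):ℝ)^2) := hzy
          _ ≤ ((n:ℝ)+1)⁻¹ - (((n+1:ℕ):ℝ)+1)⁻¹ := by rw [hcast n]; exact hgap n
    · rintro a ⟨j, i, hj1, hj2, hi1, hi2, rfl⟩
      refine ⟨(xx j i, rad (n+1)), ⟨j, i, hj1, by omega, hi1, hi2, rfl⟩, ?_⟩
      apply hblt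
      rw [d_self, hcast n]
      exact hgap0 n
  refine ⟨⟨fun n => ⟨Fset n, hFfin n, hFne n⟩, hem⟩, ?_, ?_, ?_, ?_⟩
  · refine ⟨m, xx, fun j i _ hi1 hi2 => hSK j (xx_mem j i hi1 hi2), ?_, fun n => rfl⟩
    intro j hj y hy
    obtain ⟨z, hz, hzy⟩ := hScov j hj y hy
    obtain ⟨i, hi1, hi2, hxz⟩ := exists_idx j z hz
    exact ⟨i, hi1, hi2, by rw [hxz]; exact hzy⟩
  · rintro n p ⟨j, i, hj1, hj2, hi1, hi2, rfl⟩
    exact ⟨hSK j (xx_mem j i hi1 hi2), rfl⟩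
  · intro n a ha
    have haS : a ∈ S 1 := hSsup 1 (Set.mem_union_left _ ha)
    obtain ⟨i, hi1, hi2, hxz⟩ := exists_idx 1 a haS
    exact ⟨1, i, le_refl _, by omega, hi1, hi2, by rw [hxz]⟩
  · intro n y hy
    obtain ⟨z, hz, hzy⟩ := hScov (n+1) (by omega) y hy
    obtain ⟨i, hi1, hi2, hxz⟩ := exists_idx (n+1) z hz
    refine ⟨(xx (n+1) i, rad n), ⟨n+1, i, by omega, le_refl _, hi1, hi2, rfl⟩, ?_⟩
    rw [hxz]
    calc Q.d z y < 1 / (2*(((n+1:ℕ)):ℝ)^2) := hzy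
      _ = 1 / (2*((n:ℝ)+1)^2) := by rw [hcast]

lemma cbWB_mk (c c' : Q.Chain) :
    Q.cbWB (Quotient.mk Q.chainSetoid c) (Quotient.mk Q.chainSetoid c') ↔ Q.chainWB c c' :=
  Iff.rfl

lemma subset_of_chainLE (hT1 : Q.IsT1) {K L : Set X} (hKc : @IsCompact X Q.tau K)
    (cK cL : Q.Chain)
    (hK1 : ∀ n p, p ∈ (cK.1 n).1 → p.1 ∈ K ∧ p.2 = ((n : ℝ≥0) + 1)⁻¹)
    (hL1 : ∀ n p, p ∈ (cL.1 n).1 → p.1 ∈ L ∧ p.2 = ((n : ℝ≥0) + 1)⁻¹)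
    (hL3 : ∀ n y, y ∈ L → ∃ p ∈ (cL.1 n).1, Q.d p.1 y < 1 / (2 * ((n : ℝ) + 1) ^ 2))
    (hle : Q.chainLE cK cL) : L ⊆ K := by
  intro w hw
  apply mem_of_approx Q hT1 hKc
  intro ε hε
  obtain ⟨n, hn⟩ := exists_nat_one_div_lt hε
  obtain ⟨mm, hmm⟩ := hle n
  obtain ⟨p, hp, hpl⟩ := hL3 mm w hw
  obtain ⟨a, ha, hab⟩ := hmm.1 p hp
  have h1 := (hK1 _ _ ha).2
  have h2 := (hL1 _ _ hp).2
  have hab' : Q.d a.1 p.1 < ((n:ℝ)+1)⁻¹ - ((mm:ℝ)+1)⁻¹ := by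
    have := hab
    unfold QuasiMetric.blt at this
    rwa [h1, h2, coe_rad, coe_rad] at this
  refine ⟨a.1, (hK1 _ _ ha).1, ?_⟩
  have htri := Q.triangle a.1 p.1 w
  have hnum := num2 mm
  rw [one_div] at hn
  linarith

lemma exists_lower_chain (P : Set X) (hPfin : P.Finite) (hPne : P.Nonempty) (ρ : ℝ≥0) :
    ∃ cI : Q.Chain, ∀ n, (cI.1 n).1 = (fun x => ((x, ρ + ((n : ℝ≥0) + 1)⁻¹) : FB X)) '' P := by
  have hfin : ∀ n : ℕ, ((fun x => ((x, ρ + ((n : ℝ≥0) + 1)⁻¹) : FB X)) '' P).Finite :=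
    fun n => hPfin.image _
  have hne : ∀ n : ℕ, ((fun x => ((x, ρ + ((n : ℝ≥0) + 1)⁻¹) : FB X)) '' P).Nonempty :=
    fun n => hPne.image _
  have hcoe : ∀ n : ℕ, (((ρ + ((n : ℝ≥0) + 1)⁻¹ : ℝ≥0)) : ℝ) = (ρ:ℝ) + ((n:ℝ)+1)⁻¹ := by
    intro n
    rw [NNReal.coe_add, coe_rad]
  have hem : ∀ n, Q.em ⟨_, hfin n, hne n⟩ ⟨_, hfin (n+1), hne (n+1)⟩ := by
    intro n
    have hnum : (0:ℝ) < ((n:ℝ)+1)⁻¹ - ((n:ℝ)+1+1)⁻¹ := by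
      have hE : ((n:ℝ)+1+1) = ((n:ℝ)+2) := by ring
      rw [hE]
      exact gap_pos n
    constructor
    · rintro b ⟨x, hx, rfl⟩
      refine ⟨(x, ρ + ((n : ℝ≥0) + 1)⁻¹), ⟨x, hx, rfl⟩, ?_⟩
      show Q.d x x < _ - _
      rw [d_self, hcoe n, hcoe (n+1)]
      push_cast
      linarith
    · rintro a ⟨x, hx, rfl⟩
      refine ⟨(x, ρ + (((n+1 : ℕ) : ℝ≥0) + 1)⁻¹), ⟨x, hx, rfl⟩, ?_⟩
      show Q.d x x < _ - _
      rw [d_self, hcoe n, hcoe (n+1)]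
      push_cast
      linarith
  exact ⟨⟨fun n => ⟨_, hfin n, hne n⟩, hem⟩, fun n => rfl⟩

lemma key_lower (φ : Q.K0T → Q.CBX)
    (hφ : ∀ (K : Q.K0T) (c : Q.Chain), Q.IsStdRep K.1 c → φ K = Quotient.mk Q.chainSetoid c)
    (P : Set X) (hPfin : P.Finite) (hPne : P.Nonempty) (ρ : ℝ≥0) (hρ : 0 < (ρ:ℝ)) :
    ∃ I : Q.CBX,
      (∀ K : Q.K0T, P ⊆ K.1 → (∀ k ∈ K.1, ∃ x ∈ P, Q.d x k < (ρ:ℝ)/2) → Q.cbWB I (φ K)) ∧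
      (∀ L : Q.K0T, Q.cbWB I (φ L) →
        (∀ x ∈ P, ∃ z ∈ L.1, Q.d x z < (ρ:ℝ)) ∧ (∀ w ∈ L.1, ∃ x ∈ P, Q.d x w < (ρ:ℝ))) := by
  classical
  obtain ⟨cI, hcI⟩ := exists_lower_chain Q P hPfin hPne ρ
  have hcoe : ∀ n : ℕ, (((ρ + ((n : ℝ≥0) + 1)⁻¹ : ℝ≥0)) : ℝ) = (ρ:ℝ) + ((n:ℝ)+1)⁻¹ := by
    intro n
    rw [NNReal.coe_add, coe_rad]
  refine ⟨Quotient.mk Q.chainSetoid cI, ?_, ?_⟩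
  · intro K hPK hnet
    obtain ⟨cK, hstd, hK1, hK2, _⟩ := exists_stdChain Q K.1 P K.2.1 K.2.2 hPfin hPK
    rw [hφ K cK hstd]
    rw [cbWB_mk]
    obtain ⟨mK, hmK⟩ := exists_nat_one_div_lt (by linarith : (0:ℝ) < (ρ:ℝ)/2)
    rw [one_div] at hmK
    refine ⟨mK, fun n => ⟨?_, ?_⟩⟩
    · intro b hb
      obtain ⟨hbK, hbr⟩ := hK1 mK b hb
      obtain ⟨x, hx, hxb⟩ := hnet b.1 hbK
      refine ⟨(x, ρ + ((n : ℝ≥0) + 1)⁻¹), by rw [hcI]; exact ⟨x, hx, rfl⟩, ?_⟩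
      show Q.d x b.1 < _ - _
      rw [hcoe, hbr, coe_rad]
      have := rad_pos n
      linarith
    · intro a ha
      rw [hcI] at ha
      obtain ⟨x, hx, rfl⟩ := ha
      refine ⟨(x, ((mK : ℝ≥0) + 1)⁻¹), hK2 mK x hx, ?_⟩
      show Q.d x x < _ - _
      rw [d_self, hcoe, coe_rad]
      have := rad_pos n
      linarith
  · intro L hL
    obtain ⟨cL, hstd, hL1, _, hL3⟩ := exists_stdChain Q L.1 ∅ L.2.1 L.2.2
      Set.finite_empty (Set.empty_subset _)
    rw [hφ L cL hstd, cbWB_mk] at hL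
    obtain ⟨mL, hmL⟩ := hL
    have hmLpos := rad_pos mL
    constructor
    · intro x hx
      have hall : ∀ n : ℕ, ∃ b ∈ (cL.1 mL).1,
          Q.d x b.1 < ((ρ:ℝ) - ((mL:ℝ)+1)⁻¹) + ((n:ℝ)+1)⁻¹ := by
        intro n
        obtain ⟨b, hb, hblt⟩ := (hmL n).2 (x, ρ + ((n : ℝ≥0) + 1)⁻¹)
          (by rw [hcI]; exact ⟨x, hx, rfl⟩)
        refine ⟨b, hb, ?_⟩
        have := hblt
        unfold QuasiMetric.blt at this
        rw [hcoe, (hL1 mL b hb).2, coe_rad] at this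
        linarith
      obtain ⟨b, hb, hble⟩ := finite_min (cL.1 mL).2.1 (fun b => Q.d x b.1) _ hall
      exact ⟨b.1, (hL1 mL b hb).1, by linarith⟩
    · intro w hw
      obtain ⟨p, hp, hpw⟩ := hL3 mL w hw
      have hall : ∀ n : ℕ, ∃ x ∈ P,
          Q.d x p.1 < ((ρ:ℝ) - ((mL:ℝ)+1)⁻¹) + ((n:ℝ)+1)⁻¹ := by
        intro n
        obtain ⟨a, ha, hblt⟩ := (hmL n).1 p hp
        rw [hcI] at ha
        obtain ⟨x, hx, rfl⟩ := ha
        refine ⟨x, hx, ?_⟩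
        have := hblt
        unfold QuasiMetric.blt at this
        rw [hcoe, (hL1 mL p hp).2, coe_rad] at this
        linarith
      obtain ⟨x, hx, hxle⟩ := finite_min hPfin (fun x => Q.d x p.1) _ hall
      refine ⟨x, hx, ?_⟩
      have htri := Q.triangle x p.1 w
      have hnum := num2 mL
      rw [one_div] at hnum
      have : 1 / (2 * ((mL:ℝ) + 1) ^ 2) < ((mL:ℝ)+1)⁻¹ := num2 mL
      linarith

lemma num3 (m : ℕ) : 1 / (2 * ((m:ℝ) + 1) ^ 2) ≤ (2 * ((m:ℝ) + 1))⁻¹ := by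
  rw [one_div, inv_le_inv₀ (by positivity) (by positivity)]
  nlinarith

lemma dirA (φ : Q.K0T → Q.CBX)
    (hφ : ∀ (K : Q.K0T) (c : Q.Chain), Q.IsStdRep K.1 c → φ K = Quotient.mk Q.chainSetoid c)
    (I : Q.CBX) : @IsOpen Q.K0T Q.vietoris {K : Q.K0T | Q.cbWB I (φ K)} := by
  classical
  letI : TopologicalSpace X := Q.tau
  letI : TopologicalSpace Q.K0T := Q.vietoris
  rw [isOpen_iff_forall_mem_open]
  intro K hK
  obtain ⟨cK, hstd, hK1, _, hK3⟩ := exists_stdChain Q K.1 ∅ K.2.1 K.2.2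
    Set.finite_empty (Set.empty_subset _)
  have hφK := hφ K cK hstd
  have hWB : Q.chainWB (Quotient.out I) cK := by
    have h2 : Q.cbWB (Quotient.mk Q.chainSetoid (Quotient.out I))
        (Quotient.mk Q.chainSetoid cK) := by
      have h3 : Quotient.mk Q.chainSetoid (Quotient.out I) = I := Quotient.out_eq I
      rw [h3, ← hφK]
      exact hK
    exact (cbWB_mk Q _ _).mp h2
  obtain ⟨m, hm⟩ := hWB
  set P : Set X := Prod.fst '' (cK.1 m).1 with hP
  have hPfin : P.Finite := (cK.1 m).2.1.image _
  have hPK : P ⊆ K.1 := by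
    rintro _ ⟨p, hp, rfl⟩
    exact (hK1 m p hp).1
  set ε : ℝ := (2*((m:ℝ)+1))⁻¹ with hεdef
  have hεpos : 0 < ε := by rw [hεdef]; positivity
  have hUopen : IsOpen (⋃ x ∈ P, Q.ball x ε) := isOpen_biUnion fun x _ => isOpen_ball Q hεpos
  refine ⟨{L : Q.K0T | L.1 ⊆ ⋃ x ∈ P, Q.ball x ε} ∩
    ⋂ x ∈ P, {L : Q.K0T | (L.1 ∩ Q.ball x ε).Nonempty}, ?_, ?_, ?_, ?_⟩
  · -- subset
    rintro L ⟨hLU, hLx'⟩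
    have hLx : ∀ x ∈ P, (L.1 ∩ Q.ball x ε).Nonempty := by
      intro x hx
      exact Set.mem_iInter₂.mp hLx' x hx
    have hch : ∀ x : X, ∃ y, x ∈ P → (y ∈ L.1 ∧ Q.d x y < ε) := by
      intro x
      by_cases hx : x ∈ P
      · obtain ⟨y, hy1, hy2⟩ := hLx x hx
        exact ⟨y, fun _ => ⟨hy1, hy2⟩⟩
      · obtain ⟨y0, hy0⟩ := L.2.1
        exact ⟨y0, fun h => absurd h hx⟩
    choose f hf using hch
    have hALsub : f '' P ⊆ L.1 := by
      rintro _ ⟨x, hx, rfl⟩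
      exact (hf x hx).1
    obtain ⟨cL, hstdL, hL1, hL2, _⟩ := exists_stdChain Q L.1 (f '' P) L.2.1 L.2.2
      (hPfin.image f) hALsub
    show Q.cbWB I (φ L)
    rw [hφ L cL hstdL, ← Quotient.out_eq I]
    rw [cbWB_mk]
    have hemKL : Q.em (cK.1 m) (cL.1 (2*m+1)) := by
      constructor
      · intro b hb
        obtain ⟨hbL, hbr⟩ := hL1 _ b hb
        obtain ⟨x, hx, hxb⟩ := Set.mem_iUnion₂.mp (hLU hbL)
        obtain ⟨p, hp, hpx⟩ := hx
        have hpeq : ((x, ((m : ℝ≥0) + 1)⁻¹) : FB X) = p := by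
          rw [← hpx, ← (hK1 m p hp).2]
        refine ⟨(x, ((m : ℝ≥0) + 1)⁻¹), by rw [hpeq]; exact hp, ?_⟩
        show Q.d x b.1 < _ - _
        rw [coe_rad, hbr, coe_rad, num4 m]
        exact hxb
      · intro a ha
        have hax : a.1 ∈ P := ⟨a, ha, rfl⟩
        refine ⟨(f a.1, (((2*m+1 : ℕ) : ℝ≥0) + 1)⁻¹), hL2 _ (f a.1) ⟨a.1, hax, rfl⟩, ?_⟩
        show Q.d a.1 (f a.1) < _ - _
        rw [(hK1 m a ha).2, coe_rad, coe_rad, num4 m]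
        exact (hf a.1 hax).2
    exact ⟨2*m+1, fun n => Q.em_trans (hm n) hemKL⟩
  · -- open
    apply IsOpen.inter
    · exact TopologicalSpace.GenerateOpen.basic _ (Or.inr ⟨_, hUopen, rfl⟩)
    · exact Set.Finite.isOpen_biInter hPfin fun x _ =>
        TopologicalSpace.GenerateOpen.basic _ (Or.inl ⟨_, isOpen_ball Q hεpos, rfl⟩)
  · -- mem part 1
    intro w hw
    obtain ⟨p, hp, hpw⟩ := hK3 m w hw
    refine Set.mem_iUnion₂.mpr ⟨p.1, ⟨p, hp, rfl⟩, ?_⟩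
    show Q.d p.1 w < ε
    calc Q.d p.1 w < 1 / (2 * ((m:ℝ) + 1) ^ 2) := hpw
      _ ≤ ε := num3 m
  · apply Set.mem_iInter₂.mpr
    intro x hx
    exact ⟨x, hPK hx, mem_ball_self Q hεpos⟩

lemma dirB_diamond (φ : Q.K0T → Q.CBX)
    (hφ : ∀ (K : Q.K0T) (c : Q.Chain), Q.IsStdRep K.1 c → φ K = Quotient.mk Q.chainSetoid c)
    {V : Set X} (hV : IsOpen[Q.tau] V) :
    @IsOpen Q.K0T (TopologicalSpace.generateFrom
      ((fun s => φ ⁻¹' s) '' {s | ∃ I : Q.CBX, s = {J | Q.cbWB I J}}))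
      {K : Q.K0T | (K.1 ∩ V).Nonempty} := by
  classical
  letI : TopologicalSpace Q.K0T := TopologicalSpace.generateFrom
    ((fun s => φ ⁻¹' s) '' {s | ∃ I : Q.CBX, s = {J | Q.cbWB I J}})
  rw [isOpen_iff_forall_mem_open]
  rintro K ⟨y, hyK, hyV⟩
  obtain ⟨r, hr, hball⟩ := exists_ball_subset Q hV y hyV
  have hcρ : ((r.toNNReal : ℝ≥0) : ℝ) = r := Real.coe_toNNReal r hr.le
  obtain ⟨P0, hP0fin, hP0K, hP0net⟩ := precompact_of_compact Q K.2.2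
    (show (0:ℝ) < r/2 by linarith)
  obtain ⟨I, hIK, hIL⟩ := key_lower Q φ hφ (insert y P0) (hP0fin.insert y)
    ⟨y, Set.mem_insert _ _⟩ r.toNNReal (by rw [hcρ]; exact hr)
  refine ⟨φ ⁻¹' {J | Q.cbWB I J}, ?_, ?_, ?_⟩
  · intro L hL
    obtain ⟨hii, _⟩ := hIL L hL
    obtain ⟨z, hz, hdz⟩ := hii y (Set.mem_insert _ _)
    rw [hcρ] at hdz
    exact ⟨z, hz, hball hdz⟩
  · exact TopologicalSpace.GenerateOpen.basic _ ⟨{J | Q.cbWB I J}, ⟨I, rfl⟩, rfl⟩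
  · refine hIK K (Set.insert_subset hyK hP0K) ?_
    intro k hk
    obtain ⟨x, hx, hxk⟩ := hP0net k hk
    exact ⟨x, Set.mem_insert_of_mem _ hx, by rw [hcρ]; exact hxk⟩

lemma dirB_box (φ : Q.K0T → Q.CBX)
    (hφ : ∀ (K : Q.K0T) (c : Q.Chain), Q.IsStdRep K.1 c → φ K = Quotient.mk Q.chainSetoid c)
    {V : Set X} (hV : IsOpen[Q.tau] V) :
    @IsOpen Q.K0T (TopologicalSpace.generateFrom
      ((fun s => φ ⁻¹' s) '' {s | ∃ I : Q.CBX, s = {J | Q.cbWB I J}}))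
      {K : Q.K0T | K.1 ⊆ V} := by
  classical
  letI : TopologicalSpace Q.K0T := TopologicalSpace.generateFrom
    ((fun s => φ ⁻¹' s) '' {s | ∃ I : Q.CBX, s = {J | Q.cbWB I J}})
  rw [isOpen_iff_forall_mem_open]
  intro K hK
  have hrad : ∀ w : X, ∃ rw : ℝ, w ∈ K.1 → (0 < rw ∧ Q.ball w rw ⊆ V) := by
    intro w
    by_cases hw : w ∈ K.1
    · obtain ⟨r, hr, hb⟩ := exists_ball_subset Q hV w (hK hw)
      exact ⟨r, fun _ => ⟨hr, hb⟩⟩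
    · exact ⟨1, fun h => absurd h hw⟩
  choose rr hrr using hrad
  have hcov : K.1 ⊆ ⋃ w ∈ K.1, Q.ball w (rr w / 4) := by
    intro w hw
    exact Set.mem_iUnion₂.mpr ⟨w, hw, mem_ball_self Q (by linarith [(hrr w hw).1])⟩
  letI : TopologicalSpace X := Q.tau
  obtain ⟨F, hFK, hFfin, hFcov⟩ := K.2.2.elim_finite_subcover_image
    (fun w hw => isOpen_ball Q (by linarith [(hrr w hw).1])) hcov
  obtain ⟨k0, hk0⟩ := K.2.1
  obtain ⟨w0, hw0F, _⟩ := Set.mem_iUnion₂.mp (hFcov hk0)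
  have hFne : hFfin.toFinset.Nonempty := ⟨w0, hFfin.mem_toFinset.mpr hw0F⟩
  set ρr : ℝ := hFfin.toFinset.inf' hFne (fun w => rr w / 2) with hρr
  have hρrpos : 0 < ρr := by
    rw [hρr]
    apply Finset.lt_inf'_iff _ |>.mpr
    intro w hw
    linarith [(hrr w (hFK (hFfin.mem_toFinset.mp hw))).1]
  have hρrle : ∀ w ∈ F, ρr ≤ rr w / 2 := fun w hw =>
    Finset.inf'_le _ (hFfin.mem_toFinset.mpr hw)
  have hcρ : ((ρr.toNNReal : ℝ≥0) : ℝ) = ρr := Real.coe_toNNReal _ hρrpos.le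
  obtain ⟨P, hPfin, hPK, hPnet⟩ := precompact_of_compact Q K.2.2
    (show (0:ℝ) < ρr/2 by linarith)
  have hPne : P.Nonempty := by
    obtain ⟨x, hx, _⟩ := hPnet k0 hk0
    exact ⟨x, hx⟩
  obtain ⟨I, hIK, hIL⟩ := key_lower Q φ hφ P hPfin hPne ρr.toNNReal (by rw [hcρ]; exact hρrpos)
  have hballP : ∀ x ∈ P, Q.ball x ρr ⊆ V := by
    intro x hx z hz
    obtain ⟨w, hwF, hwx⟩ := Set.mem_iUnion₂.mp (hFcov (hPK hx))
    have h1 : Q.d w x < rr w / 4 := hwx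
    have h2 : Q.d x z < ρr := hz
    have h3 := Q.triangle w x z
    have h4 := hρrle w hwF
    refine (hrr w (hFK hwF)).2 ?_
    show Q.d w z < rr w
    linarith
  refine ⟨φ ⁻¹' {J | Q.cbWB I J}, ?_, ?_, ?_⟩
  · intro L hL
    obtain ⟨_, hi⟩ := hIL L hL
    intro w hw
    obtain ⟨x, hx, hxw⟩ := hi w hw
    rw [hcρ] at hxw
    exact hballP x hx hxw
  · exact TopologicalSpace.GenerateOpen.basic _ ⟨{J | Q.cbWB I J}, ⟨I, rfl⟩, rfl⟩
  · refine hIK K hPK ?_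
    intro k hk
    obtain ⟨x, hx, hxk⟩ := hPnet k hk
    exact ⟨x, hx, by rw [hcρ]; exact hxk⟩

end StmtNine


/-- `φ(K) = K*` is a topological embedding of `(K_0(X), τ_V)` into
`(CBX, σ)`: injective, continuous, and inducing (hence a homeomorphism onto its image). -/
theorem stmt9 {X : Type} (Q : QuasiMetric X) (hT1 : Q.IsT1) (hB : Q.Bounded)
    (hY : Q.SeqYonedaComplete) (φ : Q.K0T → Q.CBX)
    (hφ : ∀ (K : Q.K0T) (c : Q.Chain), Q.IsStdRep K.1 c →
      φ K = Quotient.mk Q.chainSetoid c) :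
    Function.Injective φ ∧ (@Continuous _ _ Q.vietoris Q.scottTop φ) ∧
      Q.vietoris = TopologicalSpace.induced φ Q.scottTop := by
  classical
  have hGI : TopologicalSpace.induced φ Q.scottTop = TopologicalSpace.generateFrom
      ((fun s => φ ⁻¹' s) '' {s | ∃ I : Q.CBX, s = {J | Q.cbWB I J}}) := by
    rw [QuasiMetric.scottTop]
    exact induced_generateFrom_eq
  have heq : Q.vietoris = TopologicalSpace.induced φ Q.scottTop := by
    rw [hGI]
    apply le_antisymm
    · apply TopologicalSpace.le_generateFrom_iff_subset_isOpen.mpr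
      rintro s ⟨s', ⟨I, rfl⟩, rfl⟩
      exact StmtNine.dirA Q φ hφ I
    · show TopologicalSpace.generateFrom _ ≤ Q.vietoris
      apply TopologicalSpace.le_generateFrom_iff_subset_isOpen.mpr
      rintro s (⟨V, hV, rfl⟩ | ⟨V, hV, rfl⟩)
      · exact StmtNine.dirB_diamond Q φ hφ hV
      · exact StmtNine.dirB_box Q φ hφ hV
  have hinj : Function.Injective φ := by
    intro K L hKL
    obtain ⟨cK, hstdK, hK1, _, hK3⟩ := StmtNine.exists_stdChain Q K.1 ∅ K.2.1 K.2.2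
      Set.finite_empty (Set.empty_subset _)
    obtain ⟨cL, hstdL, hL1, _, hL3⟩ := StmtNine.exists_stdChain Q L.1 ∅ L.2.1 L.2.2
      Set.finite_empty (Set.empty_subset _)
    have hmk : Quotient.mk Q.chainSetoid cK = Quotient.mk Q.chainSetoid cL := by
      rw [← hφ K cK hstdK, ← hφ L cL hstdL]
      exact hKL
    have hE : Q.chainEquiv cK cL := Quotient.exact hmk
    apply Subtype.ext
    apply Set.Subset.antisymm
    · exact StmtNine.subset_of_chainLE Q hT1 L.2.2 cL cK hL1 hK1 hK3 hE.2
    · exact StmtNine.subset_of_chainLE Q hT1 K.2.2 cK cL hK1 hL1 hL3 hE.1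
  exact ⟨hinj, (continuous_iff_le_induced (t₁ := Q.vietoris) (t₂ := Q.scottTop) (f := φ)).mpr heq.le, heq⟩
end
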